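/- arXiv:1801.00517 — 2 statements merged into one kernel-verified Lean document; each statement's English description precedes it below -/
import Mathlib

section
/- Let a, q, t, j be integers with t > 0, q ≥ 2, gcd(t,q) = 1, t | a²+1, and set a' = a + tj, b' = q(a'²+1)/t. Assume gcd(a',q) = 1 and let t* satisfy t·t* ≡ 1 (mod q). Then S(a',b') has reduced denominator q and q·S(a',b') = λ(a,t,t*) + Δ(a·t* + j), where λ(a,t,t*) = (q²−1)a/t − (q²−1)a·t* − q·S(aq,t) and Δ(ℓ) = (q²−1)ℓ + q·S(ℓ,q). Moreover both λ(a,t,t*) and Δ(a·t*+j) are integers. -/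
open Finset

/-- residue of `x*k` mod `M`. -/
def rr (x : ℤ) (M k : ℕ) : ℤ := x * k % (M:ℤ)
/-- quotient of `x*k` by `M`. -/
def ffq (x : ℤ) (M k : ℕ) : ℤ := x * k / (M:ℤ)

def Vv (u v : ℤ) (M : ℕ) : ℤ :=
  ∑ k ∈ Finset.Ico 1 M, (2 * rr u M k - M) * (2 * rr v M k - M)

def Qs (x : ℤ) (M : ℕ) : ℤ := ∑ k ∈ Finset.Ico 1 M, (k:ℤ) * rr x M k

lemma rr_add_ffq (x : ℤ) (M k : ℕ) : (M:ℤ) * ffq x M k + rr x M k = x * k :=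
  Int.mul_ediv_add_emod _ _

lemma rr_nonneg {M : ℕ} (hM : 0 < M) (x : ℤ) (k : ℕ) : 0 ≤ rr x M k :=
  Int.emod_nonneg _ (by exact_mod_cast hM.ne')

lemma rr_lt {M : ℕ} (hM : 0 < M) (x : ℤ) (k : ℕ) : rr x M k < M :=
  Int.emod_lt_of_pos _ (by exact_mod_cast hM)

lemma gauss1 (M : ℕ) : 2 * ∑ k ∈ Finset.Ico 1 M, (k:ℤ) = M * (M - 1) := by
  induction M with
  | zero => simp
  | succ M ih =>
    rcases Nat.eq_zero_or_pos M with h | h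
    · subst h; simp
    · rw [Finset.sum_Ico_succ_top h]
      push_cast
      push_cast at ih
      ring_nf
      ring_nf at ih
      linarith

lemma gauss2 (M : ℕ) : 6 * ∑ k ∈ Finset.Ico 1 M, (k:ℤ)^2 = M * (M - 1) * (2*M - 1) := by
  induction M with
  | zero => simp
  | succ M ih =>
    rcases Nat.eq_zero_or_pos M with h | h
    · subst h; simp
    · rw [Finset.sum_Ico_succ_top h]
      push_cast
      push_cast at ih
      ring_nf
      ring_nf at ih
      linarith

/-- permutation lemma -/
lemma perm_sum (g : ℤ → ℤ) {x : ℤ} {M : ℕ} (hx : IsCoprime x (M:ℤ)) :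
    ∑ k ∈ Finset.Ico 1 M, g (rr x M k) = ∑ k ∈ Finset.Ico 1 M, g (k:ℤ) := by
  obtain ⟨u, v, huv⟩ := hx
  have hux : u * x ≡ 1 [ZMOD (M:ℤ)] := Int.modEq_iff_dvd.mpr ⟨v, by linarith⟩
  -- the map k ↦ (x*k % M).toNat is a bijection of Ico 1 M
  have hmem : ∀ (w : ℤ), IsCoprime w (M:ℤ) → ∀ k ∈ Finset.Ico 1 M, (rr w M k).toNat ∈ Finset.Ico 1 M := by
    intro w hw k hk
    rw [Finset.mem_Ico] at hk ⊢
    have hM : 0 < M := lt_of_le_of_lt (Nat.zero_le _) hk.2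
    have h0 : 0 ≤ rr w M k := rr_nonneg hM w k
    have h1 : rr w M k < M := rr_lt hM w k
    constructor
    · by_contra hcon
      push_neg at hcon
      interval_cases h : (rr w M k).toNat
      have hz : rr w M k = 0 := by omega
      have hdvd : (M:ℤ) ∣ w * k := Int.dvd_of_emod_eq_zero hz
      have : (M:ℤ) ∣ (k:ℤ) := (hw.symm).dvd_of_dvd_mul_left hdvd
      have := Int.le_of_dvd (by exact_mod_cast hk.1) this
      omega
    · omega
  have hcopu : IsCoprime u (M:ℤ) := ⟨x, v, by linarith⟩
  have hinv : ∀ k ∈ Finset.Ico 1 M, rr u M ((rr x M k).toNat) = (k:ℤ) := by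
    intro k hk
    rw [Finset.mem_Ico] at hk
    have hM : 0 < M := lt_of_le_of_lt (Nat.zero_le _) hk.2
    have h0 : 0 ≤ rr x M k := rr_nonneg hM x k
    unfold rr at h0 ⊢
    rw [Int.toNat_of_nonneg h0]
    calc u * (x * k % M) % M = u % M * (x * k % M % M) % M := by rw [Int.mul_emod]
    _ = u % M * (x * k % M) % M := by rw [Int.emod_emod_of_dvd _ dvd_rfl]
    _ = u * (x * k) % M := by rw [← Int.mul_emod]
    _ = (u * x * k) % M := by ring_nf
    _ = 1 * k % M := (hux.mul_right (k:ℤ))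
    _ = (k:ℤ) := by rw [one_mul]; exact Int.emod_eq_of_lt (by exact_mod_cast Nat.zero_le k) (by exact_mod_cast hk.2)
  have hxu : x * u ≡ 1 [ZMOD (M:ℤ)] := Int.modEq_iff_dvd.mpr ⟨v, by linarith⟩
  have hinv2 : ∀ k ∈ Finset.Ico 1 M, rr x M ((rr u M k).toNat) = (k:ℤ) := by
    intro k hk
    rw [Finset.mem_Ico] at hk
    have hM : 0 < M := lt_of_le_of_lt (Nat.zero_le _) hk.2
    have h0 : 0 ≤ rr u M k := rr_nonneg hM u k
    unfold rr at h0 ⊢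
    rw [Int.toNat_of_nonneg h0]
    calc x * (u * k % M) % M = x % M * (u * k % M % M) % M := by rw [Int.mul_emod]
    _ = x % M * (u * k % M) % M := by rw [Int.emod_emod_of_dvd _ dvd_rfl]
    _ = x * (u * k) % M := by rw [← Int.mul_emod]
    _ = (x * u * k) % M := by ring_nf
    _ = 1 * k % M := (hxu.mul_right (k:ℤ))
    _ = (k:ℤ) := by rw [one_mul]; exact Int.emod_eq_of_lt (by exact_mod_cast Nat.zero_le k) (by exact_mod_cast hk.2)
  refine Finset.sum_nbij' (fun k => (rr x M k).toNat) (fun k => (rr u M k).toNat)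
    (hmem x ⟨u, v, by linarith⟩) (hmem u hcopu) ?_ ?_ ?_
  · intro k hk
    have := hinv k hk
    have hk' := Finset.mem_Ico.mp hk
    show (rr u M ((rr x M k).toNat)).toNat = k
    omega
  · intro k hk
    have := hinv2 k hk
    have hk' := Finset.mem_Ico.mp hk
    show (rr x M ((rr u M k).toNat)).toNat = k
    omega
  · intro k hk
    have hM : 0 < M := lt_of_le_of_lt (Nat.zero_le _) (Finset.mem_Ico.mp hk).2
    rw [Int.toNat_of_nonneg (rr_nonneg hM x k)]

lemma sum_rr {x : ℤ} {M : ℕ} (hx : IsCoprime x (M:ℤ)) :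
    ∑ k ∈ Finset.Ico 1 M, rr x M k = ∑ k ∈ Finset.Ico 1 M, (k:ℤ) :=
  perm_sum id hx

lemma sum_rr_sq {x : ℤ} {M : ℕ} (hx : IsCoprime x (M:ℤ)) :
    ∑ k ∈ Finset.Ico 1 M, (rr x M k)^2 = ∑ k ∈ Finset.Ico 1 M, (k:ℤ)^2 :=
  perm_sum (·^2) hx

-- part 2 (appended to p1 content for testing)
section Counting
open Finset

-- no tie: for k ∈ [1,a), l ∈ [1,c), coprime a c : k*c ≠ l*a
lemma no_tie {a c : ℕ} (hac : Nat.Coprime a c) {k l : ℕ}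
    (hk : k ∈ Finset.Ico 1 a) (hl : l ∈ Finset.Ico 1 c) : (k:ℤ) * c ≠ (l:ℤ) * a := by
  rw [Finset.mem_Ico] at hk hl
  intro h
  have hnat : k * c = l * a := by exact_mod_cast h
  have hdvd : a ∣ k * c := ⟨l, by rw [hnat, Nat.mul_comm]⟩
  have : a ∣ k := (Nat.Coprime.dvd_of_dvd_mul_right hac hdvd)
  have := Nat.le_of_dvd (by omega) this
  omega

-- floor-count: the filter set is an initial segment
lemma ff_filter {x M : ℕ} (hxM : Nat.Coprime x M) {k : ℕ} (hk : k ∈ Finset.Ico 1 M) :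
    (Finset.Ico 1 x).filter (fun m : ℕ => (m:ℤ) * M < (k:ℤ) * x)
      = Finset.Ico 1 ((ffq (x:ℤ) M k).toNat + 1) := by
  rw [Finset.mem_Ico] at hk
  have hM : 0 < M := by omega
  have hMZ : (0:ℤ) < (M:ℤ) := by exact_mod_cast hM
  have hff0 : 0 ≤ ffq (x:ℤ) M k := Int.ediv_nonneg (by positivity) (le_of_lt hMZ)
  have hxpos : 0 < x := by
    rcases Nat.eq_zero_or_pos x with h | h
    · subst h; simp [Nat.coprime_zero_left] at hxM; omega
    · exact h
  have hkey : ∀ m : ℕ, ((m:ℤ) * M < (k:ℤ) * x ↔ (m:ℤ) ≤ ffq (x:ℤ) M k) := by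
    intro m
    unfold ffq
    rw [Int.le_ediv_iff_mul_le hMZ]
    have hne : (m:ℤ) * M ≠ (k:ℤ) * x := by
      intro h'
      have : (M:ℕ) ∣ k * x := by
        have : (M:ℤ) ∣ (k:ℤ) * x := Dvd.intro m (by linarith)
        exact_mod_cast this
      have : M ∣ k := (Nat.Coprime.dvd_of_dvd_mul_right (Nat.Coprime.symm hxM) this)
      have := Nat.le_of_dvd (by omega) this
      omega
    constructor
    · intro h
      linarith [mul_comm (k:ℤ) (x:ℤ)]
    · intro h
      have h2 : (m:ℤ) * M ≤ (k:ℤ) * x := by linarith [mul_comm (k:ℤ) (x:ℤ)]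
      exact lt_of_le_of_ne h2 hne
  have hffx : ffq (x:ℤ) M k < x := by
    unfold ffq
    rw [Int.ediv_lt_iff_lt_mul hMZ]
    have h1 : (k:ℤ) < M := by exact_mod_cast hk.2
    have h2 : (0:ℤ) < x := by exact_mod_cast hxpos
    nlinarith
  ext m
  simp only [Finset.mem_filter, Finset.mem_Ico]
  constructor
  · rintro ⟨⟨h1, h2⟩, h3⟩
    refine ⟨h1, ?_⟩
    have := (hkey m).mp h3
    omega
  · rintro ⟨h1, h2⟩
    have hm : (m:ℤ) ≤ ffq (x:ℤ) M k := by
      have : (m:ℤ) ≤ ((ffq (x:ℤ) M k).toNat : ℤ) := by exact_mod_cast Nat.le_of_lt_succ h2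
      omega
    refine ⟨⟨h1, ?_⟩, (hkey m).mpr hm⟩
    have : (m:ℤ) < (x:ℤ) := lt_of_le_of_lt hm hffx
    exact_mod_cast this

lemma ff_count {x M : ℕ} (hxM : Nat.Coprime x M) {k : ℕ} (hk : k ∈ Finset.Ico 1 M) :
    ffq (x:ℤ) M k = ∑ m ∈ Finset.Ico 1 x, (if (m:ℤ) * M < (k:ℤ) * x then (1:ℤ) else 0) := by
  rw [← Finset.sum_filter, ff_filter hxM hk]
  simp only [Finset.sum_const, Nat.card_Ico, nsmul_eq_mul, mul_one, Nat.add_sub_cancel]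
  push_cast
  have hM : 0 < M := by rw [Finset.mem_Ico] at hk; omega
  have : 0 ≤ ffq (x:ℤ) M k := Int.ediv_nonneg (by positivity) (by positivity)
  omega

lemma ff_gauss {x M : ℕ} (hxM : Nat.Coprime x M) {k : ℕ} (hk : k ∈ Finset.Ico 1 M) :
    (ffq (x:ℤ) M k)^2 + ffq (x:ℤ) M k
      = ∑ m ∈ Finset.Ico 1 x, (if (m:ℤ) * M < (k:ℤ) * x then (2*(m:ℤ)) else 0) := by
  rw [← Finset.sum_filter, ff_filter hxM hk]
  have h2 : ∑ m ∈ Finset.Ico 1 ((ffq (x:ℤ) M k).toNat + 1), (2*(m:ℤ))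
      = 2 * ∑ m ∈ Finset.Ico 1 ((ffq (x:ℤ) M k).toNat + 1), (m:ℤ) := by
    rw [Finset.mul_sum]
  rw [h2, gauss1]
  have hM : 0 < M := by rw [Finset.mem_Ico] at hk; omega
  have : 0 ≤ ffq (x:ℤ) M k := Int.ediv_nonneg (by positivity) (by positivity)
  push_cast
  rw [Int.toNat_of_nonneg this]
  ring

end Counting

section GridTriple
open Finset

lemma sum_const_Ico {n : ℕ} (hn : 1 ≤ n) (C : ℤ) :
    ∑ _k ∈ Finset.Ico 1 n, C = ((n:ℤ) - 1) * C := by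
  rw [Finset.sum_const, Nat.card_Ico, nsmul_eq_mul]
  have : ((n - 1 : ℕ) : ℤ) = (n:ℤ) - 1 := by omega
  rw [this]

lemma grid {a c : ℕ} (hac : Nat.Coprime a c) (ha : 1 ≤ a) (hc : 1 ≤ c) :
    2 * (∑ l ∈ Finset.Ico 1 c, (l:ℤ) * ffq (a:ℤ) c l)
      + (∑ k ∈ Finset.Ico 1 a, (ffq (c:ℤ) a k)^2)
      + (∑ k ∈ Finset.Ico 1 a, ffq (c:ℤ) a k)
      = ((a:ℤ) - 1) * ((c:ℤ) * ((c:ℤ) - 1)) := by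
  have h1 : ∑ l ∈ Finset.Ico 1 c, (l:ℤ) * ffq (a:ℤ) c l
      = ∑ l ∈ Finset.Ico 1 c, ∑ k ∈ Finset.Ico 1 a,
          (if (k:ℤ) * c < (l:ℤ) * a then (l:ℤ) else 0) := by
    refine Finset.sum_congr rfl (fun l hl => ?_)
    rw [ff_count hac hl, Finset.mul_sum]
    exact Finset.sum_congr rfl (fun k _ => by split <;> simp
    )
  have h2 : ∑ k ∈ Finset.Ico 1 a, ((ffq (c:ℤ) a k)^2 + ffq (c:ℤ) a k)
      = ∑ k ∈ Finset.Ico 1 a, ∑ l ∈ Finset.Ico 1 c,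
          (if (l:ℤ) * a < (k:ℤ) * c then 2*(l:ℤ) else 0) := by
    refine Finset.sum_congr rfl (fun k hk => ?_)
    exact ff_gauss hac.symm hk
  have hsplit : (∑ k ∈ Finset.Ico 1 a, (ffq (c:ℤ) a k)^2)
      + (∑ k ∈ Finset.Ico 1 a, ffq (c:ℤ) a k)
      = ∑ k ∈ Finset.Ico 1 a, ((ffq (c:ℤ) a k)^2 + ffq (c:ℤ) a k) := by
    rw [Finset.sum_add_distrib]
  rw [add_assoc, hsplit, h1, h2, Finset.sum_comm, Finset.mul_sum, ← Finset.sum_add_distrib]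
  have : ∀ k ∈ Finset.Ico 1 a, (∑ l ∈ Finset.Ico 1 c, (2:ℤ) * (if (k:ℤ) * c < (l:ℤ) * a then (l:ℤ) else 0))
      + ∑ l ∈ Finset.Ico 1 c, (if (l:ℤ) * a < (k:ℤ) * c then 2*(l:ℤ) else 0)
      = ∑ l ∈ Finset.Ico 1 c, 2*(l:ℤ) := by
    intro k hk
    rw [← Finset.sum_add_distrib]
    refine Finset.sum_congr rfl (fun l hl => ?_)
    have hne := no_tie hac hk hl
    rcases lt_trichotomy ((k:ℤ) * c) ((l:ℤ) * a) with h | h | h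
    · rw [if_pos h, if_neg (by linarith)]; ring
    · exact absurd h hne
    · rw [if_neg (by linarith), if_pos (by linarith)]; ring
  calc ∑ k ∈ Finset.Ico 1 a, ((2:ℤ) * ∑ l ∈ Finset.Ico 1 c, (if (k:ℤ) * c < (l:ℤ) * a then (l:ℤ) else 0)
        + ∑ l ∈ Finset.Ico 1 c, (if (l:ℤ) * a < (k:ℤ) * c then 2*(l:ℤ) else 0))
      = ∑ k ∈ Finset.Ico 1 a, ∑ l ∈ Finset.Ico 1 c, 2*(l:ℤ) := by
        refine Finset.sum_congr rfl (fun k hk => ?_)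
        rw [Finset.mul_sum]
        exact this k hk
    _ = ((a:ℤ) - 1) * ((c:ℤ) * ((c:ℤ) - 1)) := by
        rw [sum_const_Ico ha]
        congr 1
        have := gauss1 c
        rw [Finset.mul_sum] at *
        linarith

lemma exactly_one {a b c : ℕ} (hab : Nat.Coprime a b) (hbc : Nat.Coprime b c)
    (hac : Nat.Coprime a c) {k m l : ℕ} (hk : k ∈ Finset.Ico 1 a)
    (hm : m ∈ Finset.Ico 1 b) (hl : l ∈ Finset.Ico 1 c) :
    (if (m:ℤ) * a < (k:ℤ) * b then (1:ℤ) else 0) * (if (l:ℤ) * a < (k:ℤ) * c then (1:ℤ) else 0)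
    + (if (l:ℤ) * b < (m:ℤ) * c then (1:ℤ) else 0) * (if (k:ℤ) * b < (m:ℤ) * a then (1:ℤ) else 0)
    + (if (k:ℤ) * c < (l:ℤ) * a then (1:ℤ) else 0) * (if (m:ℤ) * c < (l:ℤ) * b then (1:ℤ) else 0)
    = 1 := by
  have t1 : (k:ℤ) * b ≠ (m:ℤ) * a := no_tie hab hk hm
  have t2 : (k:ℤ) * c ≠ (l:ℤ) * a := no_tie hac hk hl
  have t3 : (m:ℤ) * c ≠ (l:ℤ) * b := no_tie hbc hm hl
  have hka := Finset.mem_Ico.mp hk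
  have hmb := Finset.mem_Ico.mp hm
  have hlc := Finset.mem_Ico.mp hl
  have ha' : (0:ℤ) < a := by exact_mod_cast lt_of_le_of_lt (Nat.zero_le _) hka.2
  have hb' : (0:ℤ) < b := by exact_mod_cast lt_of_le_of_lt (Nat.zero_le _) hmb.2
  have hc' : (0:ℤ) < c := by exact_mod_cast lt_of_le_of_lt (Nat.zero_le _) hlc.2
  rcases lt_trichotomy ((m:ℤ) * a) ((k:ℤ) * b) with h1 | h1 | h1
  · rcases lt_trichotomy ((l:ℤ) * a) ((k:ℤ) * c) with h2 | h2 | h2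
    · rw [if_pos h1, if_pos h2,
        if_neg (show ¬ (k:ℤ)*b < (m:ℤ)*a by linarith),
        if_neg (show ¬ (k:ℤ)*c < (l:ℤ)*a by linarith)]; ring
    · exact absurd h2.symm t2
    · -- k c < l a ; derive m c < l b
      have h3 : (m:ℤ) * c < (l:ℤ) * b := by
        nlinarith [mul_lt_mul_of_pos_right h1 hc', mul_lt_mul_of_pos_right h2 hb']
      rw [if_neg (show ¬ (l:ℤ)*a < (k:ℤ)*c by linarith), if_pos h2, if_pos h3,
        if_neg (show ¬ (k:ℤ)*b < (m:ℤ)*a by linarith)]; ring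
  · exact absurd h1.symm t1
  · rcases lt_trichotomy ((l:ℤ) * b) ((m:ℤ) * c) with h2 | h2 | h2
    · rw [if_pos h2, if_pos h1,
        if_neg (show ¬ (m:ℤ)*a < (k:ℤ)*b by linarith),
        if_neg (show ¬ (m:ℤ)*c < (l:ℤ)*b by linarith)]; ring
    · exact absurd h2.symm t3
    · -- m c < l b and k b < m a ; derive k c < l a
      have h3 : (k:ℤ) * c < (l:ℤ) * a := by
        nlinarith [mul_lt_mul_of_pos_right h1 hc', mul_lt_mul_of_pos_right h2 ha']
      rw [if_neg (show ¬ (m:ℤ)*a < (k:ℤ)*b by linarith), if_pos h3, if_pos h2,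
        if_neg (show ¬ (l:ℤ)*b < (m:ℤ)*c by linarith)]; ring

lemma triple {a b c : ℕ} (hab : Nat.Coprime a b) (hbc : Nat.Coprime b c)
    (hac : Nat.Coprime a c) (ha : 1 ≤ a) (hb : 1 ≤ b) (hc : 1 ≤ c) :
    (∑ k ∈ Finset.Ico 1 a, ffq (b:ℤ) a k * ffq (c:ℤ) a k)
    + (∑ m ∈ Finset.Ico 1 b, ffq (c:ℤ) b m * ffq (a:ℤ) b m)
    + (∑ l ∈ Finset.Ico 1 c, ffq (a:ℤ) c l * ffq (b:ℤ) c l)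
    = ((a:ℤ) - 1) * (((b:ℤ) - 1) * ((c:ℤ) - 1)) := by
  have T1 : ∑ k ∈ Finset.Ico 1 a, ffq (b:ℤ) a k * ffq (c:ℤ) a k
      = ∑ k ∈ Finset.Ico 1 a, ∑ m ∈ Finset.Ico 1 b, ∑ l ∈ Finset.Ico 1 c,
        ((if (m:ℤ) * a < (k:ℤ) * b then (1:ℤ) else 0) * (if (l:ℤ) * a < (k:ℤ) * c then (1:ℤ) else 0)) := by
    refine Finset.sum_congr rfl (fun k hk => ?_)
    rw [ff_count hab.symm hk, ff_count hac.symm hk, Finset.sum_mul_sum]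
  have T2 : ∑ m ∈ Finset.Ico 1 b, ffq (c:ℤ) b m * ffq (a:ℤ) b m
      = ∑ k ∈ Finset.Ico 1 a, ∑ m ∈ Finset.Ico 1 b, ∑ l ∈ Finset.Ico 1 c,
        ((if (l:ℤ) * b < (m:ℤ) * c then (1:ℤ) else 0) * (if (k:ℤ) * b < (m:ℤ) * a then (1:ℤ) else 0)) := by
    have e1 : ∑ m ∈ Finset.Ico 1 b, ffq (c:ℤ) b m * ffq (a:ℤ) b m
        = ∑ m ∈ Finset.Ico 1 b, ∑ l ∈ Finset.Ico 1 c, ∑ k ∈ Finset.Ico 1 a,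
          ((if (l:ℤ) * b < (m:ℤ) * c then (1:ℤ) else 0) * (if (k:ℤ) * b < (m:ℤ) * a then (1:ℤ) else 0)) := by
      refine Finset.sum_congr rfl (fun m hm => ?_)
      rw [ff_count hbc.symm hm, ff_count hab hm, Finset.sum_mul_sum]
    rw [e1]
    rw [Finset.sum_congr rfl (fun m _ => Finset.sum_comm)]
    exact Finset.sum_comm
  have T3 : ∑ l ∈ Finset.Ico 1 c, ffq (a:ℤ) c l * ffq (b:ℤ) c l
      = ∑ k ∈ Finset.Ico 1 a, ∑ m ∈ Finset.Ico 1 b, ∑ l ∈ Finset.Ico 1 c,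
        ((if (k:ℤ) * c < (l:ℤ) * a then (1:ℤ) else 0) * (if (m:ℤ) * c < (l:ℤ) * b then (1:ℤ) else 0)) := by
    have e1 : ∑ l ∈ Finset.Ico 1 c, ffq (a:ℤ) c l * ffq (b:ℤ) c l
        = ∑ l ∈ Finset.Ico 1 c, ∑ k ∈ Finset.Ico 1 a, ∑ m ∈ Finset.Ico 1 b,
          ((if (k:ℤ) * c < (l:ℤ) * a then (1:ℤ) else 0) * (if (m:ℤ) * c < (l:ℤ) * b then (1:ℤ) else 0)) := by
      refine Finset.sum_congr rfl (fun l hl => ?_)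
      rw [ff_count hac hl, ff_count hbc hl, Finset.sum_mul_sum]
    rw [e1, Finset.sum_comm]
    exact Finset.sum_congr rfl (fun k _ => Finset.sum_comm)
  rw [T1, T2, T3, ← Finset.sum_add_distrib, ← Finset.sum_add_distrib]
  have : ∀ k ∈ Finset.Ico 1 a, ∀ m ∈ Finset.Ico 1 b, ∀ l ∈ Finset.Ico 1 c, True := fun _ _ _ _ _ _ => trivial
  calc ∑ k ∈ Finset.Ico 1 a, ((∑ m ∈ Finset.Ico 1 b, ∑ l ∈ Finset.Ico 1 c,
        ((if (m:ℤ) * a < (k:ℤ) * b then (1:ℤ) else 0) * (if (l:ℤ) * a < (k:ℤ) * c then (1:ℤ) else 0)))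
      + (∑ m ∈ Finset.Ico 1 b, ∑ l ∈ Finset.Ico 1 c,
        ((if (l:ℤ) * b < (m:ℤ) * c then (1:ℤ) else 0) * (if (k:ℤ) * b < (m:ℤ) * a then (1:ℤ) else 0)))
      + (∑ m ∈ Finset.Ico 1 b, ∑ l ∈ Finset.Ico 1 c,
        ((if (k:ℤ) * c < (l:ℤ) * a then (1:ℤ) else 0) * (if (m:ℤ) * c < (l:ℤ) * b then (1:ℤ) else 0))))
      = ∑ k ∈ Finset.Ico 1 a, ∑ m ∈ Finset.Ico 1 b, ∑ l ∈ Finset.Ico 1 c, (1:ℤ) := by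
        refine Finset.sum_congr rfl (fun k hk => ?_)
        rw [← Finset.sum_add_distrib, ← Finset.sum_add_distrib]
        refine Finset.sum_congr rfl (fun m hm => ?_)
        rw [← Finset.sum_add_distrib, ← Finset.sum_add_distrib]
        refine Finset.sum_congr rfl (fun l hl => ?_)
        exact exactly_one hab hbc hac hk hm hl
    _ = ((a:ℤ) - 1) * (((b:ℤ) - 1) * ((c:ℤ) - 1)) := by
        rw [Finset.sum_congr rfl (fun k _ => Finset.sum_congr rfl (fun m _ => sum_const_Ico hc 1)),
          Finset.sum_congr rfl (fun k _ => sum_const_Ico hb _), sum_const_Ico ha]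
        ring
end GridTriple

section Law
open Finset

lemma natcop_int {m n : ℕ} (h : Nat.Coprime m n) : IsCoprime (m:ℤ) (n:ℤ) := by
  rw [Int.isCoprime_iff_gcd_eq_one]
  simpa [Int.gcd] using h

lemma rr_eq (x : ℤ) (M k : ℕ) : rr x M k = x * k - (M:ℤ) * ffq x M k := by
  have := rr_add_ffq x M k; linarith

lemma skf (x : ℤ) (M : ℕ) :
    (M:ℤ) * (∑ k ∈ Finset.Ico 1 M, (k:ℤ) * ffq x M k)
      = x * (∑ k ∈ Finset.Ico 1 M, (k:ℤ)^2) - Qs x M := by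
  unfold Qs
  rw [Finset.mul_sum, Finset.mul_sum, ← Finset.sum_sub_distrib]
  refine Finset.sum_congr rfl (fun k _ => ?_)
  rw [rr_eq]; ring

lemma sf1 {x M : ℕ} :
    (M:ℤ) * (∑ k ∈ Finset.Ico 1 M, ffq (x:ℤ) M k)
      = (x:ℤ) * (∑ k ∈ Finset.Ico 1 M, (k:ℤ)) - (∑ k ∈ Finset.Ico 1 M, rr (x:ℤ) M k) := by
  rw [Finset.mul_sum, Finset.mul_sum, ← Finset.sum_sub_distrib]
  refine Finset.sum_congr rfl (fun k _ => ?_)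
  rw [rr_eq]; ring

lemma sf1' {x M : ℕ} (h : Nat.Coprime x M) :
    (M:ℤ) * (∑ k ∈ Finset.Ico 1 M, ffq (x:ℤ) M k)
      = ((x:ℤ) - 1) * (∑ k ∈ Finset.Ico 1 M, (k:ℤ)) := by
  rw [sf1, sum_rr (natcop_int h)]; ring

lemma sf2 {x M : ℕ} (h : Nat.Coprime x M) :
    (M:ℤ)^2 * (∑ k ∈ Finset.Ico 1 M, (ffq (x:ℤ) M k)^2)
      = ((x:ℤ)^2 + 1) * (∑ k ∈ Finset.Ico 1 M, (k:ℤ)^2) - 2*(x:ℤ)*Qs (x:ℤ) M := by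
  have step : (M:ℤ)^2 * (∑ k ∈ Finset.Ico 1 M, (ffq (x:ℤ) M k)^2)
      = (x:ℤ)^2 * (∑ k ∈ Finset.Ico 1 M, (k:ℤ)^2) - 2*(x:ℤ)*Qs (x:ℤ) M
        + (∑ k ∈ Finset.Ico 1 M, (rr (x:ℤ) M k)^2) := by
    unfold Qs
    rw [Finset.mul_sum, Finset.mul_sum, Finset.mul_sum, ← Finset.sum_sub_distrib,
      ← Finset.sum_add_distrib]
    refine Finset.sum_congr rfl (fun k _ => ?_)
    rw [rr_eq]; ring
  rw [step, sum_rr_sq (natcop_int h)]; ring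

lemma rrmul (u v : ℤ) (M : ℕ) :
    (M:ℤ) * (∑ k ∈ Finset.Ico 1 M, rr u M k * rr v M k)
    = -(u*v*(M:ℤ)) * (∑ k ∈ Finset.Ico 1 M, (k:ℤ)^2)
      + ((M:ℤ)*u) * Qs v M + ((M:ℤ)*v) * Qs u M
      + (M:ℤ)^3 * (∑ k ∈ Finset.Ico 1 M, ffq u M k * ffq v M k) := by
  unfold Qs
  rw [Finset.mul_sum, Finset.mul_sum, Finset.mul_sum, Finset.mul_sum, Finset.mul_sum,
    ← Finset.sum_add_distrib, ← Finset.sum_add_distrib, ← Finset.sum_add_distrib]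
  refine Finset.sum_congr rfl (fun k _ => ?_)
  rw [rr_eq u, rr_eq v]; ring

lemma vv_expand (u v : ℤ) {M : ℕ} (hM : 1 ≤ M) :
    Vv u v M = 4 * (∑ k ∈ Finset.Ico 1 M, rr u M k * rr v M k)
      - 2*(M:ℤ) * (∑ k ∈ Finset.Ico 1 M, rr u M k)
      - 2*(M:ℤ) * (∑ k ∈ Finset.Ico 1 M, rr v M k) + (M:ℤ)^2 * ((M:ℤ)-1) := by
  unfold Vv
  rw [show ((M:ℤ)^2 * ((M:ℤ)-1)) = ((M:ℤ)-1) * ((M:ℤ)^2) by ring, ← sum_const_Ico hM]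
  rw [Finset.mul_sum, Finset.mul_sum, Finset.mul_sum, ← Finset.sum_sub_distrib,
    ← Finset.sum_sub_distrib, ← Finset.sum_add_distrib]
  refine Finset.sum_congr rfl (fun k _ => ?_)
  ring

lemma VQ (u v : ℤ) {M : ℕ} (hM : 1 ≤ M) (hu : IsCoprime u (M:ℤ)) (hv : IsCoprime v (M:ℤ)) :
    Vv u v M = -(4*u*v) * (∑ k ∈ Finset.Ico 1 M, (k:ℤ)^2)
      + 4*u*Qs v M + 4*v*Qs u M
      + 4*(M:ℤ)^2 * (∑ k ∈ Finset.Ico 1 M, ffq u M k * ffq v M k)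
      - 4*(M:ℤ) * (∑ k ∈ Finset.Ico 1 M, (k:ℤ)) + (M:ℤ)^2 * ((M:ℤ)-1) := by
  have hM0 : ((M:ℤ)) ≠ 0 := by positivity
  apply mul_left_cancel₀ hM0
  rw [vv_expand u v hM]
  have h1 := rrmul u v M
  have h2 := sum_rr hu
  have h3 := sum_rr hv
  linear_combination 4 * h1 + (-2*(M:ℤ)^2) * h2 + (-2*(M:ℤ)^2) * h3

lemma qrel {a c : ℕ} (hac : Nat.Coprime a c) (ha : 1 ≤ a) (hc : 1 ≤ c) :
    12*(a:ℤ)^2 * Qs (a:ℤ) c + 12*(c:ℤ)^2 * Qs (c:ℤ) a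
    = 2*(a:ℤ)^3*(c:ℤ)*((c:ℤ)-1)*(2*(c:ℤ)-1)
      + (a:ℤ)*(c:ℤ)*((c:ℤ)^2+1)*((a:ℤ)-1)*(2*(a:ℤ)-1)
      + 3*(a:ℤ)^2*(c:ℤ)*((a:ℤ)-1)*((c:ℤ)-1)
      - 6*(a:ℤ)^2*(c:ℤ)^2*((a:ℤ)-1)*((c:ℤ)-1) := by
  have g := grid hac ha hc
  have s1 := skf (a:ℤ) c
  have s2 := sf2 (x := c) (M := a) hac.symm
  have s3 := sf1' (x := c) (M := a) hac.symm
  have g2c := gauss2 c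
  have g2a := gauss2 a
  have g1a := gauss1 a
  linear_combination (-6*(a:ℤ)^2*(c:ℤ)) * g + (12*(a:ℤ)^2) * s1 + (6*(c:ℤ)) * s2
    + (6*(a:ℤ)*(c:ℤ)) * s3 + (2*(a:ℤ)^3) * g2c + ((c:ℤ)*((c:ℤ)^2+1)) * g2a
    + (3*(a:ℤ)*(c:ℤ)*((c:ℤ)-1)) * g1a

lemma law {a b c : ℕ} (hab : Nat.Coprime a b) (hbc : Nat.Coprime b c)
    (hac : Nat.Coprime a c) (ha : 1 ≤ a) (hb : 1 ≤ b) (hc : 1 ≤ c) :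
    3*((b:ℤ)^2*(c:ℤ)^2 * Vv (b:ℤ) (c:ℤ) a + (c:ℤ)^2*(a:ℤ)^2 * Vv (c:ℤ) (a:ℤ) b
        + (a:ℤ)^2*(b:ℤ)^2 * Vv (a:ℤ) (b:ℤ) c)
    = (a:ℤ)*(b:ℤ)*(c:ℤ)*((a:ℤ)^2+(b:ℤ)^2+(c:ℤ)^2) - 3*(a:ℤ)^2*(b:ℤ)^2*(c:ℤ)^2 := by
  have VQa := VQ (b:ℤ) (c:ℤ) ha (natcop_int hab.symm) (natcop_int hac.symm)
  have VQb := VQ (c:ℤ) (a:ℤ) hb (natcop_int hbc.symm) (natcop_int hab)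
  have VQc := VQ (a:ℤ) (b:ℤ) hc (natcop_int hac) (natcop_int hbc)
  have qac := qrel hac ha hc
  have qab := qrel hab ha hb
  have qbc := qrel hbc hb hc
  have trip := triple hab hbc hac ha hb hc
  have g2a := gauss2 a
  have g2b := gauss2 b
  have g2c := gauss2 c
  have g1a := gauss1 a
  have g1b := gauss1 b
  have g1c := gauss1 c
  linear_combination (3*(b:ℤ)^2*(c:ℤ)^2) * VQa + (3*(c:ℤ)^2*(a:ℤ)^2) * VQb
    + (3*(a:ℤ)^2*(b:ℤ)^2) * VQc
    + ((b:ℤ)^3) * qac + ((c:ℤ)^3) * qab + ((a:ℤ)^3) * qbc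
    + (12*(a:ℤ)^2*(b:ℤ)^2*(c:ℤ)^2) * trip
    + (-2*(b:ℤ)^3*(c:ℤ)^3) * g2a + (-2*(c:ℤ)^3*(a:ℤ)^3) * g2b + (-2*(a:ℤ)^3*(b:ℤ)^3) * g2c
    + (-6*(a:ℤ)*(b:ℤ)^2*(c:ℤ)^2) * g1a + (-6*(a:ℤ)^2*(b:ℤ)*(c:ℤ)^2) * g1b
    + (-6*(a:ℤ)^2*(b:ℤ)^2*(c:ℤ)) * g1c

end Law


/-- The sawtooth function on rationals. -/
def saw (x : ℚ) : ℚ := if x.den = 1 then 0 else Int.fract x - 1/2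

/-- The normalized Dedekind sum `S(a,b) = 12 s(a,b)`. -/
def S (a b : ℤ) : ℚ :=
  12 * ∑ k ∈ Finset.Icc 1 b.toNat, saw ((k : ℚ) / (b : ℚ)) * saw (((a : ℚ) * k) / (b : ℚ))


section Bridge
open Finset

lemma saw_intCast (z : ℤ) : saw ((z:ℚ)) = 0 := by
  unfold saw
  rw [if_pos (Rat.den_intCast z)]

lemma saw_dvd {i b : ℤ} (hb : 0 < b) (h : b ∣ i) : saw ((i:ℚ)/(b:ℚ)) = 0 := by
  obtain ⟨c, rfl⟩ := h
  have hb0 : (b:ℚ) ≠ 0 := by exact_mod_cast hb.ne'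
  rw [show ((b*c : ℤ):ℚ) = (b:ℚ)*(c:ℚ) by push_cast; ring, mul_div_cancel_left₀ _ hb0]
  exact saw_intCast c

lemma saw_not_dvd {i b : ℤ} (hb : 0 < b) (h : ¬ b ∣ i) :
    saw ((i:ℚ)/(b:ℚ)) = ((i % b : ℤ):ℚ)/(b:ℚ) - 1/2 := by
  have hb0 : (b:ℚ) ≠ 0 := by exact_mod_cast hb.ne'
  have hden : ((i:ℚ)/(b:ℚ)).den ≠ 1 := by
    intro hd
    apply h
    have h1 : ((i:ℚ)/(b:ℚ)) = ((((i:ℚ)/(b:ℚ)).num : ℤ) : ℚ) := by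
      conv_lhs => rw [← Rat.num_div_den ((i:ℚ)/(b:ℚ))]
      rw [hd]
      simp
    have hi : (i:ℚ) = (b:ℚ) * ((((i:ℚ)/(b:ℚ)).num : ℤ) : ℚ) := by
      rw [← h1]; field_simp
    refine ⟨((i:ℚ)/(b:ℚ)).num, ?_⟩
    exact_mod_cast hi
  unfold saw
  rw [if_neg hden]
  have h2 : (b:ℚ) * ((i / b : ℤ) : ℚ) + ((i % b : ℤ):ℚ) = (i:ℚ) := by
    exact_mod_cast congrArg (fun z : ℤ => (z:ℚ)) (Int.mul_ediv_add_emod i b)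
  have hdecomp : (i:ℚ)/(b:ℚ) = ((i / b : ℤ) : ℚ) + ((i % b : ℤ):ℚ)/(b:ℚ) := by
    field_simp
    linear_combination -h2
  rw [hdecomp, Int.fract_intCast_add, Int.fract_eq_self.mpr ⟨?_, ?_⟩]
  · exact div_nonneg (by exact_mod_cast Int.emod_nonneg i hb.ne' : (0:ℚ) ≤ _)
      (by exact_mod_cast hb.le)
  · exact (div_lt_one (by exact_mod_cast hb)).mpr
      (by exact_mod_cast Int.emod_lt_of_pos i hb)

end Bridge

section Bridge2
open Finset

lemma rr_one {M k : ℕ} (hk : k ∈ Finset.Ico 1 M) : rr 1 M k = (k:ℤ) := by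
  rw [Finset.mem_Ico] at hk
  unfold rr
  rw [one_mul]
  exact Int.emod_eq_of_lt (by exact_mod_cast Nat.zero_le k) (by exact_mod_cast hk.2)

lemma SV {x b : ℤ} (hb : 1 ≤ b) (hx : IsCoprime x b) :
    (b:ℚ)^2 * S x b = 3 * ((Vv 1 x b.toNat : ℤ) : ℚ) := by
  set M := b.toNat with hMdef
  have hMb : ((M:ℕ):ℤ) = b := Int.toNat_of_nonneg (by linarith)
  have hM1 : 1 ≤ M := by omega
  have hb0 : (0:ℤ) < b := by linarith
  have hbQ : (b:ℚ) ≠ 0 := by exact_mod_cast hb0.ne'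
  unfold S
  rw [← Finset.Ico_add_one_right_eq_Icc, Finset.sum_Ico_succ_top hM1]
  have htop : saw ((M:ℚ)/(b:ℚ)) * saw ((x:ℚ)*(M:ℚ)/(b:ℚ)) = 0 := by
    have h1 : ((M:ℕ):ℚ) = ((b:ℤ):ℚ) := by exact_mod_cast hMb
    rw [h1]
    rw [saw_dvd hb0 dvd_rfl]
    ring
  rw [htop, add_zero]
  rw [show ∀ (A : ℚ), (b:ℚ)^2 * (12 * A) = 12*(b:ℚ)^2 * A from fun A => by ring,
    Finset.mul_sum]
  unfold Vv
  push_cast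
  rw [Finset.mul_sum]
  refine Finset.sum_congr rfl (fun k hk => ?_)
  have hkm := Finset.mem_Ico.mp hk
  have hk1 : ¬ b ∣ (k:ℤ) := by
    intro hd
    have := Int.le_of_dvd (by exact_mod_cast hkm.1) hd
    omega
  have hk2 : ¬ b ∣ x*(k:ℤ) := by
    intro hd
    exact hk1 ((hx.symm).dvd_of_dvd_mul_left hd)
  have hkM : (k:ℤ) < (M:ℤ) := by exact_mod_cast hkm.2
  have h1' : ((k:ℤ)) % b = (k:ℤ) :=
    Int.emod_eq_of_lt (by exact_mod_cast Nat.zero_le k) (by omega)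
  have e1 := saw_not_dvd hb0 hk1
  rw [h1'] at e1
  have e2 := saw_not_dvd hb0 hk2
  have hrr2 : x*(k:ℤ) % b = rr x M k := by unfold rr; rw [hMb]
  rw [hrr2] at e2
  push_cast at e1 e2
  rw [e1, e2]
  have hrr : ((rr 1 M k):ℚ) = (k:ℚ) := by rw [rr_one hk]; push_cast; ring
  rw [show ((M:ℕ):ℚ) = (b:ℚ) by exact_mod_cast congrArg (fun z : ℤ => (z:ℚ)) hMb]
  rw [hrr]
  field_simp
  ring

lemma V_symm (u v : ℤ) (M : ℕ) : Vv u v M = Vv v u M :=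
  Finset.sum_congr rfl (fun k _ => mul_comm _ _)

lemma rr_congr {v v' : ℤ} {M : ℕ} (h : (M:ℤ) ∣ v - v') (k : ℕ) : rr v M k = rr v' M k := by
  unfold rr
  have : v*(k:ℤ) ≡ v'*(k:ℤ) [ZMOD ((M:ℕ):ℤ)] := by
    obtain ⟨w, hw⟩ := h
    exact (Int.modEq_iff_dvd.mpr ⟨-w*(k:ℤ), by linear_combination (-(k:ℤ))*hw⟩)
  exact this

lemma V_per {v v' : ℤ} (u : ℤ) (M : ℕ) (h : (M:ℤ) ∣ v - v') : Vv u v M = Vv u v' M :=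
  Finset.sum_congr rfl (fun k _ => by rw [rr_congr h k])

lemma V_per_left {u u' : ℤ} (v : ℤ) (M : ℕ) (h : (M:ℤ) ∣ u - u') : Vv u v M = Vv u' v M :=
  Finset.sum_congr rfl (fun k _ => by rw [rr_congr h k])

lemma rr_mul_emod (u w : ℤ) (M k : ℕ) : (u * rr w M k) % ((M:ℕ):ℤ) = rr (u*w) M k := by
  unfold rr
  rw [Int.mul_emod, Int.emod_emod_of_dvd _ dvd_rfl, ← Int.mul_emod, mul_assoc]

lemma V_reindex {w : ℤ} {M : ℕ} (hw : IsCoprime w ((M:ℕ):ℤ)) (u v : ℤ) :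
    Vv (u*w) (v*w) M = Vv u v M := by
  have hperm := perm_sum (g := fun z => (2*((u*z) % ((M:ℕ):ℤ)) - (M:ℤ)) * (2*((v*z) % ((M:ℕ):ℤ)) - (M:ℤ))) hw
  calc Vv (u*w) (v*w) M
      = ∑ k ∈ Finset.Ico 1 M, (2*((u*(rr w M k)) % ((M:ℕ):ℤ)) - (M:ℤ))
          * (2*((v*(rr w M k)) % ((M:ℕ):ℤ)) - (M:ℤ)) := by
        refine Finset.sum_congr rfl (fun k _ => ?_)
        rw [rr_mul_emod, rr_mul_emod]
    _ = ∑ k ∈ Finset.Ico 1 M, (2*((u*(k:ℤ)) % ((M:ℕ):ℤ)) - (M:ℤ))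
          * (2*((v*(k:ℤ)) % ((M:ℕ):ℤ)) - (M:ℤ)) := hperm
    _ = Vv u v M := rfl

lemma rr_ne_zero {u : ℤ} {M : ℕ} (hu : IsCoprime u ((M:ℕ):ℤ)) {k : ℕ}
    (hk : k ∈ Finset.Ico 1 M) : rr u M k ≠ 0 := by
  rw [Finset.mem_Ico] at hk
  intro hz
  have hdvd : ((M:ℕ):ℤ) ∣ u * k := Int.dvd_of_emod_eq_zero hz
  have : ((M:ℕ):ℤ) ∣ (k:ℤ) := (hu.symm).dvd_of_dvd_mul_left hdvd
  have := Int.le_of_dvd (by exact_mod_cast hk.1) this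
  omega

lemma rr_neg {u : ℤ} {M : ℕ} (hu : IsCoprime u ((M:ℕ):ℤ)) {k : ℕ}
    (hk : k ∈ Finset.Ico 1 M) : rr (-u) M k = (M:ℤ) - rr u M k := by
  have hkm := Finset.mem_Ico.mp hk
  have hM : 0 < M := by omega
  have h0 := rr_nonneg hM u k
  have h1 := rr_lt hM u k
  have hne := rr_ne_zero hu hk
  have hmod : (-u)*(k:ℤ) ≡ (M:ℤ) - rr u M k [ZMOD ((M:ℕ):ℤ)] := by
    refine Int.modEq_iff_dvd.mpr ⟨1 + ffq u M k, ?_⟩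
    have := rr_add_ffq u M k
    linarith
  unfold rr
  rw [hmod]
  exact Int.emod_eq_of_lt (by omega) (by omega)

lemma V_neg_left {u : ℤ} (v : ℤ) {M : ℕ} (hu : IsCoprime u ((M:ℕ):ℤ)) :
    Vv (-u) v M = - Vv u v M := by
  unfold Vv
  rw [← Finset.sum_neg_distrib]
  refine Finset.sum_congr rfl (fun k hk => ?_)
  rw [rr_neg hu hk]
  ring

lemma QV {x : ℤ} {M : ℕ} (hM : 1 ≤ M) (hx : IsCoprime x ((M:ℕ):ℤ)) :
    Vv 1 x M = 4 * Qs x M - (M:ℤ)^2 * ((M:ℤ)-1) := by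
  rw [vv_expand 1 x hM]
  have h1 : ∑ k ∈ Finset.Ico 1 M, rr 1 M k * rr x M k = Qs x M := by
    unfold Qs
    exact Finset.sum_congr rfl (fun k hk => by rw [rr_one hk])
  have h2 : ∑ k ∈ Finset.Ico 1 M, rr 1 M k = ∑ k ∈ Finset.Ico 1 M, (k:ℤ) :=
    Finset.sum_congr rfl (fun k hk => by rw [rr_one hk])
  have h3 := sum_rr hx
  have g1 := gauss1 M
  linear_combination 4*h1 + (-2*(M:ℤ))*h2 + (-2*(M:ℤ))*h3 + (-2*(M:ℤ))*g1

lemma key12 {x : ℤ} {M : ℕ} (hx : IsCoprime x ((M:ℕ):ℤ)) :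
    12*x*Qs x M = (x^2+1)*(M:ℤ)*((M:ℤ)-1)*(2*(M:ℤ)-1)
      - 6*(M:ℤ)^2*(∑ k ∈ Finset.Ico 1 M, (ffq x M k)^2) := by
  have h1 : ∑ k ∈ Finset.Ico 1 M, (x*(k:ℤ) - rr x M k)^2
      = (M:ℤ)^2 * (∑ k ∈ Finset.Ico 1 M, (ffq x M k)^2) := by
    rw [Finset.mul_sum]
    exact Finset.sum_congr rfl (fun k _ => by rw [rr_eq]; ring)
  have h2 : ∑ k ∈ Finset.Ico 1 M, (x*(k:ℤ) - rr x M k)^2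
      = x^2 * (∑ k ∈ Finset.Ico 1 M, (k:ℤ)^2) - 2*x*Qs x M
        + ∑ k ∈ Finset.Ico 1 M, (rr x M k)^2 := by
    unfold Qs
    rw [Finset.mul_sum, Finset.mul_sum, ← Finset.sum_sub_distrib, ← Finset.sum_add_distrib]
    exact Finset.sum_congr rfl (fun k _ => by ring)
  have h3 := sum_rr_sq hx
  have g2 := gauss2 M
  linear_combination (-6)*h1 + 6*h2 + 6*h3 + (x^2+1)*g2

lemma bS_int {b : ℤ} (hb : 1 ≤ b) {x y m : ℤ} (hxy : x*y = 1 + b*m) (hx : IsCoprime x b) :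
    ∃ s0 : ℤ, (b:ℚ) * S x b = (s0:ℚ) ∧ b ∣ s0 - (x + y) := by
  set M := b.toNat with hMdef
  have hMb : ((M:ℕ):ℤ) = b := Int.toNat_of_nonneg (by linarith)
  have hM1 : 1 ≤ M := by omega
  have hxM : IsCoprime x ((M:ℕ):ℤ) := by rw [hMb]; exact hx
  have hb0 : (b:ℤ) ≠ 0 := by omega
  have hbQ : (b:ℚ) ≠ 0 := by exact_mod_cast hb0
  have hkey := key12 hxM
  rw [hMb] at hkey
  have hdvd : b^2 ∣ x * (12*Qs x M - b*(x+y)) := by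
    refine ⟨(x^2+1)*(2*b-3) - 6*(∑ k ∈ Finset.Ico 1 M, (ffq x M k)^2) - m, ?_⟩
    linear_combination hkey + (-(b:ℤ))*hxy
  have hcop2 : IsCoprime (b^2) x := (hx.symm).pow_left
  have hZ : b^2 ∣ (12*Qs x M - b*(x+y)) := hcop2.dvd_of_dvd_mul_left hdvd
  obtain ⟨w, hw⟩ := hZ
  refine ⟨(x+y) + b*(w - 3*(b-1)), ?_, ⟨w - 3*(b-1), by ring⟩⟩
  have hSV := SV hb hx
  have hQV := QV hM1 hxM
  rw [hQV] at hSV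
  apply mul_left_cancel₀ hbQ
  rw [show (b:ℚ) * ((b:ℚ) * S x b) = (b:ℚ)^2 * S x b by ring, hSV]
  push_cast
  rw [show ((M:ℕ):ℚ) = (b:ℚ) by exact_mod_cast congrArg (fun z : ℤ => (z:ℚ)) hMb]
  have hwQ : 12*((Qs x M : ℤ):ℚ) - (b:ℚ)*((x:ℚ)+(y:ℚ)) = (b:ℚ)^2*((w:ℤ):ℚ) := by
    exact_mod_cast congrArg (fun z : ℤ => (z:ℚ)) hw
  linear_combination hwQ

end Bridge2

section Slemmas
open Finset

lemma int_natcop {a b : ℕ} (h : IsCoprime (a:ℤ) (b:ℤ)) : Nat.Coprime a b := by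
  rw [Int.isCoprime_iff_gcd_eq_one] at h
  simpa [Int.gcd] using h

lemma Vv_one (u v : ℤ) : Vv u v 1 = 0 := by
  unfold Vv
  simp

lemma S_eq_of_V {x y b : ℤ} (hb : 1 ≤ b) (hx : IsCoprime x b) (hy : IsCoprime y b)
    (h : Vv 1 x b.toNat = Vv 1 y b.toNat) : S x b = S y b := by
  have h1 := SV hb hx
  have h2 := SV hb hy
  have hbQ : ((b:ℚ))^2 ≠ 0 := by
    have : (b:ℚ) ≠ 0 := by exact_mod_cast (by omega : b ≠ 0)
    positivity
  apply mul_left_cancel₀ hbQ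
  rw [h1, h2, h]

lemma S_per {x y b : ℤ} (hb : 1 ≤ b) (hx : IsCoprime x b) (h : b ∣ x - y) :
    S x b = S y b := by
  obtain ⟨k, hk⟩ := h
  have hy : IsCoprime y b := by
    have : y = x + b * (-k) := by linarith
    rw [this]
    exact hx.add_mul_left_left (-k)
  refine S_eq_of_V hb hx hy (V_per 1 b.toNat ?_)
  rw [Int.toNat_of_nonneg (by omega : (0:ℤ) ≤ b)]
  exact ⟨k, hk⟩

lemma S_neg {x b : ℤ} (hb : 1 ≤ b) (hx : IsCoprime x b) : S (-x) b = - S x b := by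
  have hxM : IsCoprime x ((b.toNat : ℕ):ℤ) := by
    rw [Int.toNat_of_nonneg (by omega : (0:ℤ) ≤ b)]; exact hx
  have h1 := SV hb hx
  have h2 := SV hb hx.neg_left
  have hbQ : ((b:ℚ))^2 ≠ 0 := by
    have : (b:ℚ) ≠ 0 := by exact_mod_cast (by omega : b ≠ 0)
    positivity
  apply mul_left_cancel₀ hbQ
  rw [h2, mul_neg, h1]
  have hV : Vv 1 (-x) b.toNat = - Vv 1 x b.toNat := by
    rw [V_symm, V_neg_left 1 hxM, V_symm]
  rw [hV]
  push_cast
  ring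

lemma S_zero (b : ℤ) : S 0 b = 0 := by
  unfold S
  have : ∀ k ∈ Finset.Icc 1 b.toNat, saw ((k:ℚ)/(b:ℚ)) * saw (((0:ℤ):ℚ)*(k:ℚ)/(b:ℚ)) = 0 := by
    intro k _
    have : ((0:ℤ):ℚ)*(k:ℚ)/(b:ℚ) = ((0:ℤ):ℚ) := by push_cast; ring
    rw [this, saw_intCast 0, mul_zero]
  rw [Finset.sum_congr rfl this]
  simp

end Slemmas

section MainId
open Finset

theorem main_id_pos {n q t c tb : ℤ} (hq : 2 ≤ q) (ht : 0 < t) (hn : 1 ≤ n)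
    (hc : n^2+1 = t*c)
    (hnq : IsCoprime n q) (htq : IsCoprime t q) (htb : q ∣ t*tb - 1) :
    S n (q*c) = ((q:ℚ)^2-1)*(n:ℚ)/((q:ℚ)*(t:ℚ)) - S (n*q) t + S (n*tb) q := by
  have hcpos : 0 < c := by nlinarith
  have cop_nt : IsCoprime n t := ⟨-n, c, by linear_combination -hc⟩
  have cop_nc : IsCoprime n c := ⟨-n, t, by linear_combination -hc⟩
  have cop_nqc : IsCoprime n (q*c) := hnq.mul_right cop_nc
  obtain ⟨e, he⟩ := htb
  have cop_tbq : IsCoprime tb q := ⟨t, -e, by linear_combination he⟩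
  have cop_ntbq : IsCoprime (n*tb) q := IsCoprime.mul_left hnq cop_tbq
  have cop_nqt : IsCoprime (n*q) t := IsCoprime.mul_left cop_nt htq.symm
  obtain ⟨u, v, huv⟩ := htq
  have htq' : IsCoprime t q := ⟨u, v, huv⟩
  have cop_vt : IsCoprime v t := ⟨q, u, by linear_combination huv⟩
  set A := n.toNat with hAdef
  set Qn := q.toNat with hQdef
  set T := t.toNat with hTdef
  set QC := (q*c).toNat with hQCdef
  have hA : ((A:ℕ):ℤ) = n := Int.toNat_of_nonneg (by omega)
  have hQ : ((Qn:ℕ):ℤ) = q := Int.toNat_of_nonneg (by omega)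
  have hT : ((T:ℕ):ℤ) = t := Int.toNat_of_nonneg (by omega)
  have hqc1 : 1 ≤ q*c := by nlinarith
  have hQC : ((QC:ℕ):ℤ) = q*c := Int.toNat_of_nonneg (by omega)
  have hA1 : 1 ≤ A := by omega
  have hQ1 : 1 ≤ Qn := by omega
  have hT1 : 1 ≤ T := by omega
  have hQC1 : 1 ≤ QC := by omega
  have cAQ : Nat.Coprime A Qn := int_natcop (by rw [hA, hQ]; exact hnq)
  have cQT : Nat.Coprime Qn T := int_natcop (by rw [hQ, hT]; exact htq'.symm)
  have cAT : Nat.Coprime A T := int_natcop (by rw [hA, hT]; exact cop_nt)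
  have cAQC : Nat.Coprime A QC := int_natcop (by rw [hA, hQC]; exact cop_nqc)
  have law1 := law cAQ cQT cAT hA1 hQ1 hT1
  have law2 := law cAQC (Nat.coprime_one_right QC) (Nat.coprime_one_right A) hA1 hQC1 (le_refl 1)
  rw [hA, hQ, hT] at law1
  simp only [Nat.cast_one] at law2
  rw [hA, hQC] at law2
  rw [Vv_one] at law2
  rw [show Vv (q*c) 1 A = Vv 1 (q*c) A from V_symm _ _ _] at law2
  -- transformations
  have hwc : IsCoprime c ((A:ℕ):ℤ) := by rw [hA]; exact cop_nc.symm
  have e1 : Vv q t A = Vv 1 (q*c) A := by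
    refine ((V_reindex hwc q t).symm.trans ((V_per (q*c) A ?_).trans (V_symm _ _ _)))
    rw [hA]; exact ⟨n, by linear_combination -hc⟩
  have hwtb : IsCoprime tb ((Qn:ℕ):ℤ) := by rw [hQ]; exact cop_tbq
  have e2 : Vv t n Qn = Vv 1 (n*tb) Qn := by
    refine (V_reindex hwtb t n).symm.trans (V_per_left (n*tb) Qn ?_)
    rw [hQ]; exact ⟨e, by linear_combination he⟩
  have hwv : IsCoprime v ((T:ℕ):ℤ) := by rw [hT]; exact cop_vt
  have hwnq : IsCoprime (n*q) ((T:ℕ):ℤ) := by rw [hT]; exact cop_nqt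
  have e3 : Vv n q T = - Vv 1 (n*q) T := by
    have s1 : Vv n q T = Vv (n*v) (q*v) T := (V_reindex hwv n q).symm
    have s2 : Vv (n*v) (q*v) T = Vv (n*v) 1 T := by
      refine V_per (n*v) T ?_
      rw [hT]; exact ⟨-u, by linear_combination huv⟩
    have s3 : Vv (n*v) 1 T = Vv 1 (n*v) T := V_symm _ _ _
    have s4 : Vv 1 (n*v) T = Vv (n*q) ((n*v)*(n*q)) T := by
      have h5 := V_reindex hwnq 1 (n*v)
      rw [one_mul] at h5
      exact h5.symm
    have s5 : Vv (n*q) ((n*v)*(n*q)) T = Vv (n*q) (-1) T := by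
      refine V_per (n*q) T ?_
      rw [hT]
      refine ⟨q*v*c + u, by linear_combination (q*v)*hc - huv⟩
    have s6 : Vv (n*q) (-1) T = - Vv 1 (n*q) T := by
      rw [V_symm]
      exact V_neg_left (n*q) isCoprime_one_left
    exact s1.trans (s2.trans (s3.trans (s4.trans (s5.trans s6))))
  rw [e1, e2, e3] at law1
  -- SV conversions
  have SVn := SV hqc1 cop_nqc
  have SVq := SV (by omega : (1:ℤ) ≤ q) cop_ntbq
  have SVt := SV (by omega : (1:ℤ) ≤ t) cop_nqt
  rw [← hQCdef] at SVn
  rw [← hQdef] at SVq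
  rw [← hTdef] at SVt
  have L1Q := congrArg (fun z : ℤ => (z:ℚ)) law1
  have L2Q := congrArg (fun z : ℤ => (z:ℚ)) law2
  push_cast at L1Q L2Q SVn SVq SVt
  have hcQ : (n:ℚ)^2 + 1 = (t:ℚ)*(c:ℚ) := by exact_mod_cast congrArg (fun z : ℤ => (z:ℚ)) hc
  have hn0 : (n:ℚ) ≠ 0 := by exact_mod_cast (by omega : n ≠ 0)
  have hq0 : (q:ℚ) ≠ 0 := by exact_mod_cast (by omega : q ≠ 0)
  have ht0 : (t:ℚ) ≠ 0 := by exact_mod_cast (by omega : t ≠ 0)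
  have hc0 : (c:ℚ) ≠ 0 := by exact_mod_cast (by omega : c ≠ 0)
  have hmain : (n:ℚ)^2*(q:ℚ)^2*(c:ℚ)^2*(t:ℚ)^2 * (S n (q*c) - S (n*tb) q + S (n*q) t)
      = (n:ℚ)^3*(q:ℚ)*(c:ℚ)^2*(t:ℚ)*((q:ℚ)^2-1) := by
    linear_combination ((n:ℚ)^2*(t:ℚ)^2)*SVn + (-(n:ℚ)^2*(c:ℚ)^2*(t:ℚ)^2)*SVq
      + ((n:ℚ)^2*(q:ℚ)^2*(c:ℚ)^2)*SVt + ((t:ℚ)^2)*L2Q + (-(c:ℚ)^2)*L1Q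
      + ((n:ℚ)*(q:ℚ)*(c:ℚ)*(t:ℚ)*((t:ℚ)-(c:ℚ)*(q:ℚ)^2))*hcQ
  have hfinal : S n (q*c) - S (n*tb) q + S (n*q) t = ((q:ℚ)^2-1)*(n:ℚ)/((q:ℚ)*(t:ℚ)) := by
    rw [eq_div_iff (by exact mul_ne_zero hq0 ht0)]
    apply mul_left_cancel₀ (show (n:ℚ)^2*(q:ℚ)*(c:ℚ)^2*(t:ℚ) ≠ 0 by
      exact mul_ne_zero (mul_ne_zero (mul_ne_zero (pow_ne_zero 2 hn0) hq0) (pow_ne_zero 2 hc0)) ht0)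
    linear_combination hmain
  linarith [hfinal]

end MainId

section Final
open Finset

theorem main_id {n q t c tb : ℤ} (hq : 2 ≤ q) (ht : 0 < t) (hc : n^2+1 = t*c)
    (hnq : IsCoprime n q) (htq : IsCoprime t q) (htb : q ∣ t*tb - 1) :
    S n (q*c) = ((q:ℚ)^2-1)*(n:ℚ)/((q:ℚ)*(t:ℚ)) - S (n*q) t + S (n*tb) q := by
  rcases lt_trichotomy n 0 with hneg | hzero | hpos
  · have hn' : 1 ≤ -n := by omega
    have hc' : (-n)^2+1 = t*c := by linear_combination hc
    have h := main_id_pos hq ht hn' hc' hnq.neg_left htq htb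
    have hcpos : 0 < c := by nlinarith
    have hqc1 : (1:ℤ) ≤ q*c := by nlinarith
    have cop_nt : IsCoprime n t := ⟨-n, c, by linear_combination -hc⟩
    have cop_nc : IsCoprime n c := ⟨-n, t, by linear_combination -hc⟩
    have cop_nqc : IsCoprime n (q*c) := hnq.mul_right cop_nc
    obtain ⟨e, he⟩ := htb
    have cop_tbq : IsCoprime tb q := ⟨t, -e, by linear_combination he⟩
    have cop_ntbq : IsCoprime (n*tb) q := IsCoprime.mul_left hnq cop_tbq
    have cop_nqt : IsCoprime (n*q) t := IsCoprime.mul_left cop_nt htq.symm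
    rw [show ((-n)*q : ℤ) = -(n*q) by ring, show ((-n)*tb : ℤ) = -(n*tb) by ring] at h
    rw [S_neg hqc1 cop_nqc, S_neg (by omega) cop_nqt, S_neg (by omega) cop_ntbq] at h
    push_cast at h
    have hq0 : (q:ℚ) ≠ 0 := by exact_mod_cast (by omega : q ≠ 0)
    have ht0 : (t:ℚ) ≠ 0 := by exact_mod_cast (by omega : t ≠ 0)
    field_simp at h ⊢
    linarith [h]
  · subst hzero
    have ht1 : t = 1 := by
      have hd : t ∣ 1 := ⟨c, by linarith⟩
      exact Int.eq_one_of_dvd_one (by omega) hd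
    have hc1 : c = 1 := by
      rw [ht1] at hc; linarith
    rw [hc1, show ((0:ℤ)*q) = 0 by ring, show ((0:ℤ)*tb) = 0 by ring,
      S_zero, S_zero, S_zero]
    push_cast
    ring
  · exact main_id_pos hq ht hpos hc hnq htq htb

theorem stmt8 (a q t j tstar a' b' : ℤ) (hq : 2 ≤ q) (ht : 0 < t) (htq : IsCoprime t q)
    (hta : t ∣ a ^ 2 + 1) (ha' : a' = a + t * j) (hb' : b' * t = q * (a' ^ 2 + 1))
    (ha'q : IsCoprime a' q) (hts : t * tstar ≡ 1 [ZMOD q]) :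
    (∃ k : ℤ, IsCoprime k q ∧ S a' b' = (k : ℚ) / q) ∧
    ∃ L D : ℤ,
      (L : ℚ) = ((q ^ 2 - 1 : ℚ) * a) / t - (q ^ 2 - 1 : ℚ) * a * tstar
          - (q : ℚ) * S (a * q) t ∧
      (D : ℚ) = (q ^ 2 - 1 : ℚ) * (a * tstar + j) + (q : ℚ) * S (a * tstar + j) q ∧
      (q : ℚ) * S a' b' = (L : ℚ) + (D : ℚ) := by
  subst ha'
  obtain ⟨w, hw⟩ := hta
  have hN : (a + t*j)^2 + 1 = t*(w + (2*a*j + t*j^2)) := by linear_combination hw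
  set N := w + (2*a*j + t*j^2) with hNdef
  have hNpos : 0 < N := by nlinarith
  have hb'2 : b' = q*N := by
    have h1 : b' * t = (q*N) * t := by rw [hb']; linear_combination q * hN
    exact mul_right_cancel₀ (by omega) h1
  have htb : q ∣ t*tstar - 1 := by
    obtain ⟨x, hx⟩ := Int.ModEq.dvd hts
    exact ⟨-x, by linarith⟩
  obtain ⟨e, he⟩ := htb
  have htb' : q ∣ t*tstar - 1 := ⟨e, he⟩
  have hmain := main_id hq ht hN ha'q htq htb'
  rw [← hb'2] at hmain
  -- coprimality infrastructure
  have cop_nt : IsCoprime (a + t*j) t := ⟨-(a+t*j), N, by linear_combination -hN⟩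
  have cop_nqt : IsCoprime ((a+t*j)*q) t := IsCoprime.mul_left cop_nt htq.symm
  obtain ⟨u0, v0, hu0⟩ := id ha'q
  obtain ⟨ut, vt, hqt⟩ := id htq
  -- replace S ((a+tj)*q) t by S (a*q) t
  have hSt : S ((a+t*j)*q) t = S (a*q) t :=
    S_per (by omega) cop_nqt ⟨j*q, by ring⟩
  -- replace S ((a+tj)*tstar) q by S (a*tstar + j) q
  have cop_tbq : IsCoprime tstar q := ⟨t, -e, by linear_combination he⟩
  have cop_ntbq : IsCoprime ((a+t*j)*tstar) q := IsCoprime.mul_left ha'q cop_tbq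
  have hSq : S ((a+t*j)*tstar) q = S (a*tstar + j) q :=
    S_per (by omega) cop_ntbq ⟨j*e, by linear_combination j*he⟩
  rw [hSt, hSq] at hmain
  -- D part
  have hlinv : (a*tstar + j) * (u0*t) = 1 + q*(u0*a*e - v0) := by
    linear_combination (u0*a)*he + hu0
  have cop_l_q : IsCoprime (a*tstar + j) q := ⟨u0*t, -(u0*a*e - v0), by linarith⟩
  obtain ⟨d0, hd0, hd0c⟩ := bS_int (by omega : (1:ℤ) ≤ q) hlinv cop_l_q
  -- L part
  have hlinv2 : (a*q) * (-(a*vt)) = 1 + t*(a^2*ut - w) := by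
    linear_combination (-a^2)*hqt + (-1)*hw
  have cop_aq_t : IsCoprime (a*q) t := ⟨-(a*vt), -(a^2*ut - w), by linarith⟩
  obtain ⟨l0, hl0, hl0c⟩ := bS_int (by omega : (1:ℤ) ≤ t) hlinv2 cop_aq_t
  -- L integer
  have hLdvd : t ∣ (q^2-1)*a - (q^2-1)*a*tstar*t - q*l0 := by
    obtain ⟨w1, hw1⟩ := hl0c
    exact ⟨-(a*ut) - (q^2-1)*a*tstar - q*w1, by linear_combination (-q)*hw1 + a*hqt⟩
  obtain ⟨Lw, hLw⟩ := hLdvd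
  have hq0 : (q:ℚ) ≠ 0 := by exact_mod_cast (by omega : q ≠ 0)
  have ht0 : (t:ℚ) ≠ 0 := by exact_mod_cast (by omega : t ≠ 0)
  -- cast equations
  have hLwQ : (t:ℚ)*(Lw:ℚ) = ((q:ℚ)^2-1)*(a:ℚ) - ((q:ℚ)^2-1)*(a:ℚ)*(tstar:ℚ)*(t:ℚ) - (q:ℚ)*(l0:ℚ) := by
    exact_mod_cast congrArg (fun z : ℤ => (z:ℚ)) hLw.symm
  have hLQ : (Lw:ℚ) = ((q ^ 2 - 1 : ℚ) * a) / t - (q ^ 2 - 1 : ℚ) * a * tstar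
      - (q : ℚ) * S (a * q) t := by
    have hqlS : (q:ℚ) * ((t:ℚ) * S (a*q) t) = (q:ℚ)*(l0:ℚ) := by rw [hl0]
    field_simp
    linear_combination hLwQ + hqlS
  have hDQ : ((((q^2-1)*(a*tstar+j) + d0 : ℤ)):ℚ) = (q ^ 2 - 1 : ℚ) * ((a:ℚ) * tstar + j)
      + (q : ℚ) * S (a * tstar + j) q := by
    push_cast
    linear_combination -hd0
  -- main equation q*S = L + D
  have hqS : (q:ℚ) * S (a+t*j) b' = (Lw:ℚ) + (((q^2-1)*(a*tstar+j) + d0 : ℤ):ℚ) := by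
    rw [hLQ, hDQ]
    have := hmain
    field_simp at this ⊢
    push_cast at this ⊢
    linear_combination this
  constructor
  · -- part 1
    refine ⟨Lw + ((q^2-1)*(a*tstar+j) + d0), ?_, ?_⟩
    · -- coprime with q
      have hqX : q ∣ t*Lw := by
        rw [← hLw]
        exact ⟨a*q - a*tstar*t*q - l0 + a*e, by linear_combination a*he⟩
      have hqLw : q ∣ Lw := (htq.symm).dvd_of_dvd_mul_left hqX
      obtain ⟨z1, hz1⟩ := hqLw
      obtain ⟨z2, hz2⟩ := hd0c
      have hkform : Lw + ((q^2-1)*(a*tstar+j) + d0)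
          = u0*t + q*(z1 + q*(a*tstar+j) + z2) := by
        linear_combination hz1 + hz2
      rw [hkform]
      have hcop_u0t : IsCoprime (u0*t) q :=
        IsCoprime.mul_left ⟨a+t*j, v0, by linarith⟩ htq
      exact hcop_u0t.add_mul_left_left _
    · rw [eq_div_iff hq0]
      push_cast at hqS ⊢
      linear_combination hqS
  · refine ⟨Lw, (q^2-1)*(a*tstar+j) + d0, hLQ, ?_, ?_⟩
    · exact_mod_cast hDQ
    · exact hqS
end Final
end

section
/- Let q be an odd positive integer and ℓ an integer coprime to q. Then q·S(ℓ,q) ≡ q + 1 − 2·(ℓ/q) (mod 8), where (ℓ/q) denotes the Jacobi symbol. -/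
open Finset

/-- Gauss-lemma count for the Jacobi symbol. -/
def mu (l : ℤ) (q : ℕ) : ℕ :=
  ((Finset.Icc 1 (q/2)).filter (fun k : ℕ => (q:ℤ) < 2 * (l * (k:ℤ) % (q:ℤ)))).card

/-- Eisenstein sum. -/
def Esum (a q : ℕ) : ℕ := ∑ k ∈ Finset.Icc 1 (q/2), a * k / q

lemma emod_range {l : ℤ} {q : ℕ} (hq : 0 < q) (hl : IsCoprime l (q:ℤ)) {k : ℤ}
    (hk : ¬ (q:ℤ) ∣ k) : 0 < l * k % q ∧ l * k % q < q := by
  refine ⟨?_, Int.emod_lt_of_pos _ (by exact_mod_cast hq)⟩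
  rcases (Int.emod_nonneg (l*k) (by exact_mod_cast hq.ne' : (q:ℤ) ≠ 0)).lt_or_eq with h | h
  · exact h
  · exfalso
    have : (q:ℤ) ∣ l * k := Int.dvd_of_emod_eq_zero h.symm
    exact hk (hl.symm.dvd_of_dvd_mul_left this)

lemma image_eq_self {s : Finset ℕ} {f : ℕ → ℕ} (hmaps : ∀ k ∈ s, f k ∈ s)
    (hinj : Set.InjOn f s) : s.image f = s := by
  apply Finset.eq_of_subset_of_card_le
  · intro x hx
    rcases Finset.mem_image.1 hx with ⟨k, hk, rfl⟩
    exact hmaps k hk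
  · rw [Finset.card_image_of_injOn hinj]

lemma dvd_of_emod_eq {l : ℤ} {q : ℕ} (hl : IsCoprime l (q:ℤ)) {a b : ℤ}
    (h : l * a % q = l * b % q) : (q:ℤ) ∣ a - b := by
  have h1 : l * a ≡ l * b [ZMOD (q:ℤ)] := h
  have h2 : (q:ℤ) ∣ l * (a - b) := by
    rw [mul_sub]
    exact (dvd_sub_comm).mp (Int.ModEq.dvd h1)
  exact hl.symm.dvd_of_dvd_mul_left h2

/-- the map `k ↦ (l*k) % q` permutes `Icc 1 (q-1)`. -/
lemma image_emod {l : ℤ} {q : ℕ} (hq : 0 < q) (hl : IsCoprime l (q:ℤ)) :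
    (Finset.Icc 1 (q-1)).image (fun k : ℕ => (l * (k:ℤ) % q).toNat) = Finset.Icc 1 (q-1) := by
  apply image_eq_self
  · intro k hk
    simp only [Finset.mem_Icc] at hk ⊢
    have hnd : ¬ (q:ℤ) ∣ (k:ℤ) := by
      rw [Int.natCast_dvd_natCast]
      intro h
      have := Nat.le_of_dvd (by omega) h
      omega
    have := emod_range hq hl hnd
    omega
  · intro a ha b hb h
    simp only [Finset.coe_Icc, Set.mem_Icc] at ha hb
    simp only at h
    have ha' : ¬ (q:ℤ) ∣ (a:ℤ) := by
      rw [Int.natCast_dvd_natCast]; intro h; have := Nat.le_of_dvd (by omega) h; omega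
    have hb' : ¬ (q:ℤ) ∣ (b:ℤ) := by
      rw [Int.natCast_dvd_natCast]; intro h; have := Nat.le_of_dvd (by omega) h; omega
    have h1 := emod_range hq hl ha'
    have h2 := emod_range hq hl hb'
    have heq : l * (a:ℤ) % q = l * (b:ℤ) % q := by omega
    have := dvd_of_emod_eq hl heq
    rcases this with ⟨c, hc⟩
    have hc' : (a:ℤ) - b = q * c := hc
    have hq' : (0:ℤ) < q := by exact_mod_cast hq
    have hc0 : c = 0 := by
      by_contra hc0
      have h1 : 1 ≤ |c| := Int.one_le_abs (by omega)
      have h2 : (q:ℤ) ≤ |(a:ℤ) - b| := by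
        rw [hc', abs_mul, abs_of_nonneg hq'.le]; nlinarith
      have h4 : |(a:ℤ) - b| < q := abs_lt.2 (by constructor <;> omega)
      omega
    rw [hc0, mul_zero] at hc'
    omega

lemma natAbs_mod_cast (a k q : ℕ) : ((a * k % q : ℕ) : ℤ) = (a:ℤ) * (k:ℤ) % (q:ℤ) := by
  push_cast
  rfl

lemma image_fold {a q : ℕ} (hq : Odd q) (hcop : Nat.Coprime a q) :
    (Finset.Icc 1 (q/2)).image (fun k => min (a*k % q) (q - a*k % q)) = Finset.Icc 1 (q/2) := by
  have hq2 : q % 2 = 1 := Nat.odd_iff.mp hq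
  have hq0 : 0 < q := by omega
  have hndvd : ∀ k ∈ Finset.Icc 1 (q/2), ¬ q ∣ a * k := by
    intro k hk hdvd
    simp only [Finset.mem_Icc] at hk
    have : q ∣ k := (Nat.Coprime.dvd_of_dvd_mul_left hcop.symm hdvd)
    have := Nat.le_of_dvd (by omega) this
    omega
  apply image_eq_self
  · intro k hk
    have h1 := hndvd k hk
    have h2 : a * k % q ≠ 0 := fun h => h1 (Nat.dvd_of_mod_eq_zero h)
    have h3 : a * k % q < q := Nat.mod_lt _ hq0
    simp only [Finset.mem_Icc] at hk ⊢
    omega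
  · intro k hk j hj h
    simp only [Finset.coe_Icc, Set.mem_Icc] at hk hj
    simp only at h
    set r1 := a * k % q with hr1
    set r2 := a * j % q with hr2
    have h2k : r1 ≠ 0 := fun hh => hndvd k (by simp [Finset.mem_Icc]; omega) (Nat.dvd_of_mod_eq_zero hh)
    have h2j : r2 ≠ 0 := fun hh => hndvd j (by simp [Finset.mem_Icc]; omega) (Nat.dvd_of_mod_eq_zero hh)
    have h3k : r1 < q := Nat.mod_lt _ hq0
    have h3j : r2 < q := Nat.mod_lt _ hq0
    have hcop' : IsCoprime (a:ℤ) (q:ℤ) := Nat.isCoprime_iff_coprime.mpr hcop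
    rcases (by omega : r1 = r2 ∨ r1 + r2 = q) with hc | hc
    · -- same residues
      have heq : (a:ℤ) * k % q = (a:ℤ) * j % q := by
        rw [← natAbs_mod_cast, ← natAbs_mod_cast, ← hr1, ← hr2, hc]
      have := dvd_of_emod_eq hcop' heq
      rcases this with ⟨c, hc'⟩
      have hq' : (0:ℤ) < q := by exact_mod_cast hq0
      have hc0 : c = 0 := by
        by_contra hc0
        have h1 : 1 ≤ |c| := Int.one_le_abs (by omega)
        have h2 : (q:ℤ) ≤ |(k:ℤ) - j| := by
          rw [hc', abs_mul, abs_of_nonneg hq'.le]; nlinarith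
        have h4 : |(k:ℤ) - j| < q := abs_lt.2 (by constructor <;> omega)
        omega
      rw [hc0, mul_zero] at hc'
      omega
    · -- opposite residues
      exfalso
      have hsum : ((a:ℤ) * k % q) + ((a:ℤ) * j % q) = q := by
        rw [← natAbs_mod_cast, ← natAbs_mod_cast, ← hr1, ← hr2]
        exact_mod_cast hc
      have hz : ((a:ℤ) * (k + j)) % q = 0 := by
        rw [mul_add, Int.add_emod, hsum, Int.emod_self]
      have hdvd : (q:ℤ) ∣ (a:ℤ) * ((k:ℤ) + j) := Int.dvd_of_emod_eq_zero hz
      have : (q:ℤ) ∣ ((k:ℤ) + j) := hcop'.symm.dvd_of_dvd_mul_left hdvd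
      have : (q:ℕ) ∣ (k + j) := by exact_mod_cast this
      have := Nat.le_of_dvd (by omega) this
      omega

/-- `mu` for a natural `a` counts in ℕ. -/
lemma mu_nat (a q : ℕ) : mu (a:ℤ) q =
    ((Finset.Icc 1 (q/2)).filter (fun k : ℕ => q < 2 * (a * k % q))).card := by
  unfold mu
  congr 1
  apply Finset.filter_congr
  intro k _
  rw [← natAbs_mod_cast]
  constructor
  · intro h; exact_mod_cast h
  · intro h; exact_mod_cast h

lemma odd_natCast_zmod2 {a : ℕ} (ha : Odd a) : ((a : ℕ) : ZMod 2) = 1 := by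
  obtain ⟨c, rfl⟩ := ha
  push_cast
  rw [show ((2:ZMod 2)) = 0 from rfl, zero_mul, zero_add]

lemma eisenstein_parity {a q : ℕ} (ha : Odd a) (hq : Odd q) (hcop : Nat.Coprime a q) :
    ((mu (a:ℤ) q : ℕ) : ZMod 2) = (Esum a q : ZMod 2) := by
  have hq2 : q % 2 = 1 := Nat.odd_iff.mp hq
  have hq0 : 0 < q := by omega
  have hq1 : ((q : ℕ) : ZMod 2) = 1 := odd_natCast_zmod2 hq
  set s := Finset.Icc 1 (q/2) with hs
  have hndvd : ∀ k ∈ s, a * k % q ≠ 0 := by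
    intro k hk h
    simp only [hs, Finset.mem_Icc] at hk
    have : q ∣ k := Nat.Coprime.dvd_of_dvd_mul_left hcop.symm (Nat.dvd_of_mod_eq_zero h)
    have := Nat.le_of_dvd (by omega) this
    omega
  -- key identity summed over s
  have key : ∀ k ∈ s, ((k:ℕ) : ZMod 2) =
      ((a * k / q : ℕ) : ZMod 2) + ((min (a*k % q) (q - a*k % q) : ℕ) : ZMod 2)
        + (if q < 2 * (a * k % q) then (1 : ZMod 2) else 0) := by
    intro k hk
    have h2 : a * k % q ≠ 0 := hndvd k hk
    have h3 : a * k % q < q := Nat.mod_lt _ hq0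
    have hdm : a * k = q * (a * k / q) + a * k % q := (Nat.div_add_mod _ _).symm
    have hcast : ((a * k : ℕ) : ZMod 2) = ((k:ℕ) : ZMod 2) := by
      push_cast
      rw [odd_natCast_zmod2 ha, one_mul]
    rw [← hcast]
    by_cases hbig : q < 2 * (a * k % q)
    · rw [if_pos hbig]
      have hmin : min (a*k % q) (q - a*k % q) = q - a*k % q := by omega
      rw [hmin]
      calc ((a * k : ℕ) : ZMod 2) = ((q * (a * k / q) + a * k % q : ℕ) : ZMod 2) := by rw [← hdm]
        _ = _ := by
          push_cast [Nat.cast_sub (by omega : a*k%q ≤ q)]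
          rw [hq1]
          have h2' : (2 : ZMod 2) = 0 := rfl
          linear_combination (((a * k % q : ℕ) : ZMod 2) - 1) * h2'
    · rw [if_neg hbig]
      have hmin : min (a*k % q) (q - a*k % q) = a*k % q := by omega
      rw [hmin]
      calc ((a * k : ℕ) : ZMod 2) = ((q * (a * k / q) + a * k % q : ℕ) : ZMod 2) := by rw [← hdm]
        _ = _ := by
          push_cast
          rw [hq1]
          ring
  have hsumkey : ∑ k ∈ s, ((k:ℕ) : ZMod 2) =
      (∑ k ∈ s, ((a * k / q : ℕ) : ZMod 2)) + (∑ k ∈ s, ((min (a*k % q) (q - a*k % q) : ℕ) : ZMod 2))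
        + (∑ k ∈ s, if q < 2 * (a * k % q) then (1 : ZMod 2) else 0) := by
    rw [← Finset.sum_add_distrib, ← Finset.sum_add_distrib]
    exact Finset.sum_congr rfl key
  -- the fold sum equals the plain sum
  have hfold : (∑ k ∈ s, ((min (a*k % q) (q - a*k % q) : ℕ) : ZMod 2)) =
      ∑ k ∈ s, ((k:ℕ) : ZMod 2) := by
    have himg := image_fold hq hcop
    have hinj : Set.InjOn (fun k => min (a*k % q) (q - a*k % q)) s := by
      intro x hx y hy hxy
      have hcard : (s.image (fun k => min (a*k % q) (q - a*k % q))).card = s.card := by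
        rw [himg]
      exact Finset.injOn_of_card_image_eq hcard hx hy hxy
    rw [← Finset.sum_image (fun x hx y hy h => hinj hx hy h), himg]
  -- the ite sum is mu
  have hite : (∑ k ∈ s, if q < 2 * (a * k % q) then (1 : ZMod 2) else 0) =
      ((mu (a:ℤ) q : ℕ) : ZMod 2) := by
    rw [mu_nat, Finset.card_filter]
    push_cast
    rfl
  -- Esum cast
  have hE : (Esum a q : ZMod 2) = ∑ k ∈ s, ((a * k / q : ℕ) : ZMod 2) := by
    unfold Esum
    push_cast
    rfl
  rw [hfold, hite] at hsumkey
  rw [hE]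
  have h2' : (2 : ZMod 2) = 0 := rfl
  linear_combination (-1 : ZMod 2) * hsumkey - (∑ k ∈ s, ((a * k / q : ℕ) : ZMod 2)) * h2'

open Nat in
private theorem my_sum_Ico_eq_card_lt {p q : ℕ} :
    ∑ a ∈ Ico 1 (p / 2).succ, a * q / p =
      ((Ico 1 (p / 2).succ ×ˢ Ico 1 (q / 2).succ).filter
        (fun x : ℕ × ℕ => x.2 * p ≤ x.1 * q)).card :=
  if hp0 : p = 0 then by simp [hp0, Finset.ext_iff]
  else
    calc
      ∑ a ∈ Ico 1 (p / 2).succ, a * q / p =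
          ∑ a ∈ Ico 1 (p / 2).succ,
            ((Ico 1 (q / 2).succ).filter (fun x => x * p ≤ a * q)).card :=
        Finset.sum_congr rfl fun x hx =>
          ZMod.div_eq_filter_card (Nat.pos_of_ne_zero hp0) <|
            calc
              x * q / p ≤ p / 2 * q / p := by
                have := Nat.le_of_lt_succ (Finset.mem_Ico.mp hx).2; gcongr
              _ ≤ _ := Nat.div_mul_div_le_div _ _ _
      _ = _ := by
        rw [← Finset.card_sigma]
        exact Finset.card_nbij' (fun a => ⟨a.1, a.2⟩) (fun a => ⟨a.1, a.2⟩)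
          (by simp +contextual only [Set.MapsTo, Finset.mem_coe, Finset.mem_filter, Finset.mem_sigma, and_self_iff,
            forall_true_iff, Finset.mem_product])
          (by simp +contextual only [Set.MapsTo, Finset.mem_coe, Finset.mem_filter, Finset.mem_sigma, and_self_iff,
            forall_true_iff, Finset.mem_product]) (fun _ _ => rfl) (fun _ _ => rfl)

open Nat in
theorem lattice_reciprocity (p q : ℕ) (hp0 : 0 < p) (hcop : Nat.Coprime p q) :
    ∑ a ∈ Ico 1 (p / 2).succ, a * q / p + ∑ a ∈ Ico 1 (q / 2).succ, a * p / q =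
      p / 2 * (q / 2) := by
  have hswap :
      ((Ico 1 (q / 2).succ ×ˢ Ico 1 (p / 2).succ).filter
        (fun x : ℕ × ℕ => x.2 * q ≤ x.1 * p)).card =
      ((Ico 1 (p / 2).succ ×ˢ Ico 1 (q / 2).succ).filter
        (fun x : ℕ × ℕ => x.1 * q ≤ x.2 * p)).card :=
    Finset.card_equiv (Equiv.prodComm _ _)
      (fun ⟨_, _⟩ => by
        simp +contextual only [Finset.mem_filter, and_self_iff, Prod.swap_prod_mk,
          forall_true_iff, Finset.mem_product, Equiv.prodComm_apply, and_assoc, _root_.and_left_comm])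
  have hdisj :
      Disjoint
        ((Ico 1 (p / 2).succ ×ˢ Ico 1 (q / 2).succ).filter
          (fun x : ℕ × ℕ => x.2 * p ≤ x.1 * q))
        ((Ico 1 (p / 2).succ ×ˢ Ico 1 (q / 2).succ).filter
          (fun x : ℕ × ℕ => x.1 * q ≤ x.2 * p)) := by
    apply Finset.disjoint_filter.2 fun x hx hpq hqp => ?_
    have hxmem := Finset.mem_product.1 hx
    have hx1 := Finset.mem_Ico.1 hxmem.1
    have hx2 := Finset.mem_Ico.1 hxmem.2
    have heq : x.2 * p = x.1 * q := le_antisymm hpq hqp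
    -- p ∣ x.1 * q, coprime p q → p ∣ x.1
    have hdvd : p ∣ x.1 * q := ⟨x.2, by rw [← heq]; ring⟩
    have : p ∣ x.1 := (Nat.Coprime.dvd_of_dvd_mul_right hcop hdvd)
    have h1 := Nat.le_of_dvd (by omega) this
    have : x.1 ≤ p / 2 := Nat.le_of_lt_succ hx1.2
    have := Nat.div_lt_self hp0 (by norm_num : 1 < 2)
    omega
  have hunion :
      ((Ico 1 (p / 2).succ ×ˢ Ico 1 (q / 2).succ).filter
          (fun x : ℕ × ℕ => x.2 * p ≤ x.1 * q)) ∪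
        ((Ico 1 (p / 2).succ ×ˢ Ico 1 (q / 2).succ).filter
          (fun x : ℕ × ℕ => x.1 * q ≤ x.2 * p)) =
        Ico 1 (p / 2).succ ×ˢ Ico 1 (q / 2).succ :=
    Finset.ext fun x => by
      have := le_total (x.2 * p) (x.1 * q)
      simp only [Finset.mem_union, Finset.mem_filter, Finset.mem_Ico, Finset.mem_product]
      tauto
  rw [my_sum_Ico_eq_card_lt, my_sum_Ico_eq_card_lt, hswap,
    ← Finset.card_union_of_disjoint hdisj, hunion, Finset.card_product]
  simp only [Nat.card_Ico, tsub_zero, Nat.succ_sub_succ_eq_sub]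

lemma neg_emod_eq {x : ℤ} {q : ℕ} (hq : 0 < q) (h : x % q ≠ 0) :
    (-x) % q = q - x % q := by
  have h0 : (0:ℤ) ≤ x % q := Int.emod_nonneg x (by exact_mod_cast hq.ne')
  have h1 : x % q < q := Int.emod_lt_of_pos x (by exact_mod_cast hq)
  have key : -x = ((q:ℤ) - x % q) + q * (-(x / q) - 1) := by
    linear_combination Int.mul_ediv_add_emod x q
  rw [key, Int.add_mul_emod_self_left, Int.emod_eq_of_lt (by omega) (by omega)]

lemma mu_congr {l1 l2 : ℤ} {q : ℕ} (h : l1 % q = l2 % q) : mu l1 q = mu l2 q := by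
  unfold mu
  congr 1
  apply Finset.filter_congr
  intro k _
  rw [Int.mul_emod l1 k, h, ← Int.mul_emod]

lemma mu_le (l : ℤ) (q : ℕ) : mu l q ≤ q / 2 := by
  unfold mu
  calc _ ≤ (Finset.Icc 1 (q/2)).card := Finset.card_filter_le _ _
    _ = q / 2 := by simp [Nat.card_Icc]

lemma mu_neg {l : ℤ} {q : ℕ} (hq : Odd q) (hl : IsCoprime l (q:ℤ)) :
    mu (-l) q = q / 2 - mu l q := by
  have hq2 : q % 2 = 1 := Nat.odd_iff.mp hq
  have hq0 : 0 < q := by omega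
  unfold mu
  have hcongr : ∀ k ∈ Finset.Icc 1 (q/2),
      ((q:ℤ) < 2 * (-l * (k:ℤ) % q)) ↔ ¬ ((q:ℤ) < 2 * (l * (k:ℤ) % q)) := by
    intro k hk
    simp only [Finset.mem_Icc] at hk
    have hndvd : ¬ (q:ℤ) ∣ (k:ℤ) := by
      rw [Int.natCast_dvd_natCast]; intro hdvd
      have := Nat.le_of_dvd (by omega) hdvd; omega
    have hr := emod_range hq0 hl hndvd
    have hneg : (-(l * (k:ℤ))) % q = q - l * (k:ℤ) % q := neg_emod_eq hq0 (by omega)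
    have h2 : -l * (k:ℤ) = -(l * k) := by ring
    rw [h2, hneg]
    -- q odd so 2 * (l*k % q) ≠ q
    have hodd : 2 * (l * (k:ℤ) % q) ≠ q := by
      intro hcontra
      have : ((q:ℕ) : ℤ) % 2 = 1 := by exact_mod_cast (by omega : (q % 2 : ℕ) = 1)
      omega
    omega
  rw [Finset.filter_congr hcongr]
  have h2 := Finset.card_filter_add_card_filter_not
    (s := Finset.Icc 1 (q/2)) (p := fun k : ℕ => (q:ℤ) < 2 * (l * (k:ℤ) % q))
  have hcard : (Finset.Icc 1 (q/2)).card = q / 2 := by simp [Nat.card_Icc]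
  simp only [not_lt] at h2 ⊢
  omega

lemma chi4_odd {q : ℕ} (hq : Odd q) : (ZMod.χ₄ (q : ZMod 4) : ℤ) = (-1)^(q / 2) := by
  have hq2 : q % 2 = 1 := Nat.odd_iff.mp hq
  have h := ZMod.χ₄_nat_eq_if_mod_four q
  rcases (by omega : q % 4 = 1 ∨ q % 4 = 3) with h4 | h4
  · rw [h, if_neg (by omega), if_pos h4]
    have : Even (q / 2) := by rw [Nat.even_iff]; omega
    rw [this.neg_one_pow]
  · rw [h, if_neg (by omega), if_neg (by omega)]
    have : Odd (q / 2) := by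
      rw [Nat.odd_iff]; omega
    rw [this.neg_one_pow]

lemma negOnePow_congr {m n : ℕ} (h : (m : ZMod 2) = n) : ((-1:ℤ))^m = (-1)^n := by
  have : m % 2 = n % 2 := by
    have := (ZMod.natCast_eq_natCast_iff m n 2).mp h
    exact this
  rw [neg_one_pow_eq_pow_mod_two, this, ← neg_one_pow_eq_pow_mod_two]

theorem gauss_jacobi (q : ℕ) (hq : Odd q) (l : ℤ) (hl : IsCoprime l (q:ℤ)) :
    jacobiSym l q = (-1)^(mu l q) := by
  induction q using Nat.strong_induction_on generalizing l with
  | _ q IH =>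
  have hq2 : q % 2 = 1 := Nat.odd_iff.mp hq
  rcases eq_or_ne q 1 with rfl | hq1
  · rw [jacobiSym.one_right]
    unfold mu
    norm_num
  have hq3 : 3 ≤ q := by omega
  have hq0 : 0 < q := by omega
  -- core : the odd case
  have core : ∀ a : ℕ, Odd a → 0 < a → a < q → Nat.Coprime a q →
      jacobiSym (a:ℤ) q = (-1)^(mu (a:ℤ) q) := by
    intro a ha ha0 haq hacop
    have hIH : jacobiSym (q:ℤ) a = (-1)^(mu (q:ℤ) a) :=
      IH a haq ha (q:ℤ) (Nat.isCoprime_iff_coprime.mpr hacop.symm)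
    have hrec := jacobiSym.quadratic_reciprocity ha hq
    have hpar1 := eisenstein_parity ha hq hacop
    have hpar2 := eisenstein_parity hq ha hacop.symm
    have hlat := lattice_reciprocity q a hq0 (hacop.symm.symm).symm
    have hE1 : Esum a q = ∑ k ∈ Finset.Ico 1 (q/2).succ, k * a / q := by
      unfold Esum
      rw [← Finset.Ico_add_one_right_eq_Icc]
      exact Finset.sum_congr rfl (fun k _ => by rw [mul_comm])
    have hE2 : Esum q a = ∑ k ∈ Finset.Ico 1 (a/2).succ, k * q / a := by
      unfold Esum
      rw [← Finset.Ico_add_one_right_eq_Icc]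
      exact Finset.sum_congr rfl (fun k _ => by rw [mul_comm])
    have hlat' : Esum a q + Esum q a = q / 2 * (a / 2) := by
      rw [hE1, hE2]; exact hlat
    rw [hrec, hIH, ← pow_add]
    apply negOnePow_congr
    push_cast
    rw [hpar2, hpar1]
    have hc : ((Esum a q : ℕ) : ZMod 2) + ((Esum q a : ℕ) : ZMod 2) = ((q/2 * (a/2) : ℕ) : ZMod 2) := by
      rw [← Nat.cast_add, hlat']
    push_cast at hc ⊢
    have h2' : (2 : ZMod 2) = 0 := rfl
    linear_combination hc + (((a/2 : ℕ) : ZMod 2) * ((q/2 : ℕ) : ZMod 2) - ((Esum a q : ℕ) : ZMod 2)) * h2'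
  -- reduce l to its residue
  set l' : ℕ := (l % q).toNat with hl'def
  have hl0 : 0 ≤ l % q := Int.emod_nonneg l (by exact_mod_cast hq0.ne')
  have hl'cast : (l' : ℤ) = l % q := Int.toNat_of_nonneg hl0
  have hlq : l % q < q := Int.emod_lt_of_pos l (by exact_mod_cast hq0)
  have hlne : l % q ≠ 0 := by
    intro h0
    have hdvd : (q:ℤ) ∣ l := Int.dvd_of_emod_eq_zero h0
    have := hl.symm.isUnit_of_dvd' dvd_rfl hdvd
    rw [Int.isUnit_iff] at this
    omega
  have hl'1 : 1 ≤ l' := by omega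
  have hl'q : l' < q := by omega
  have hl'cop : IsCoprime ((l':ℤ)) (q:ℤ) := by
    rw [hl'cast]
    have h1 : l % q = l + (q:ℤ) * (-(l / q)) := by
      linear_combination Int.mul_ediv_add_emod l q
    rw [h1]
    exact hl.add_mul_left_left _
  have hl'copN : Nat.Coprime l' q := by
    rw [← Nat.isCoprime_iff_coprime]
    exact hl'cop
  have hmueq : mu l q = mu ((l':ℤ)) q := mu_congr (by
    rw [hl'cast, Int.emod_emod_of_dvd _ dvd_rfl])
  have hJeq : jacobiSym l q = jacobiSym ((l':ℤ)) q := jacobiSym.mod_left' (by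
    rw [hl'cast, Int.emod_emod_of_dvd _ dvd_rfl])
  rw [hJeq, hmueq]
  rcases Nat.even_or_odd l' with hev | hodd
  · -- even residue: use q - l'
    set b : ℕ := q - l' with hbdef
    have hbodd : Odd b := by rw [Nat.odd_iff]; rw [Nat.even_iff] at hev; omega
    have hb1 : 1 ≤ b := by omega
    have hbq : b < q := by rw [Nat.even_iff] at hev; omega
    have hbcop : IsCoprime ((b:ℤ)) (q:ℤ) := by
      have h1 : ((b:ℤ)) = -(l':ℤ) + (q:ℤ) * 1 := by push_cast [hbdef]; omega
      rw [h1]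
      exact (hl'cop.neg_left).add_mul_left_left _
    have hbcopN : Nat.Coprime b q := by rw [← Nat.isCoprime_iff_coprime]; exact hbcop
    have hmod : ((l':ℤ)) % q = (-(b:ℤ)) % q := by
      have h1 : (-(b:ℤ)) = (l':ℤ) - q := by push_cast [hbdef]; omega
      rw [h1, Int.sub_emod_right, Int.emod_eq_of_lt (by positivity) (by exact_mod_cast hl'q)]
    rw [mu_congr hmod, jacobiSym.mod_left' hmod, mu_neg hq hbcop,
      jacobiSym.neg _ hq, core b hbodd (by omega) hbq hbcopN, chi4_odd hq]
    have hsq : ((-1:ℤ))^(mu ((b:ℤ)) q) * (-1)^(mu ((b:ℤ)) q) = 1 := by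
      rw [← pow_add]
      have hev2 : Even (mu ((b:ℤ)) q + mu ((b:ℤ)) q) := ⟨_, rfl⟩
      exact hev2.neg_one_pow
    have key : ((-1:ℤ))^(q/2 - mu ((b:ℤ)) q) * (-1)^(mu ((b:ℤ)) q) = (-1)^(q/2) := by
      rw [← pow_add, Nat.sub_add_cancel (mu_le _ _)]
    rw [← key, mul_assoc, hsq, mul_one]
  · exact core l' hodd (by omega) hl'q hl'copN

lemma saw_eq_of_fract_ne {x : ℚ} (h : Int.fract x ≠ 0) : saw x = Int.fract x - 1/2 := by
  unfold saw
  rw [if_neg]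
  intro hden
  apply h
  have hx : ((x.num : ℤ) : ℚ) = x := by
    rw [← Rat.den_eq_one_iff]
    exact hden
  rw [← hx, Int.fract_intCast]

lemma fract_div (a : ℤ) (q : ℕ) (hq : 0 < q) :
    Int.fract ((a:ℚ)/(q:ℚ)) = ((a % q : ℤ):ℚ)/(q:ℚ) := by
  have hq' : ((q:ℚ)) ≠ 0 := by positivity
  have h0 := Int.mul_ediv_add_emod a q
  have h0' := congrArg (fun z : ℤ => (z:ℚ)) h0
  push_cast at h0'
  have h1 : (a:ℚ)/(q:ℚ) = ((a/(q:ℤ) : ℤ):ℚ) + ((a % q : ℤ):ℚ)/(q:ℚ) := by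
    field_simp
    linear_combination -h0'
  rw [h1, Int.fract_intCast_add, Int.fract_eq_self.mpr]
  constructor
  · have := Int.emod_nonneg a (by exact_mod_cast hq.ne' : (q:ℤ) ≠ 0)
    positivity
  · rw [div_lt_one (by positivity)]
    exact_mod_cast Int.emod_lt_of_pos a (by exact_mod_cast hq)

lemma saw_div (a : ℤ) (q : ℕ) (hq : 0 < q) (h : ¬ (q:ℤ) ∣ a) :
    saw ((a:ℚ)/(q:ℚ)) = ((a % q : ℤ):ℚ)/(q:ℚ) - 1/2 := by
  have hfr := fract_div a q hq
  have hne : a % (q:ℤ) ≠ 0 := fun hc => h (Int.dvd_of_emod_eq_zero hc)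
  have hnn : 0 ≤ a % (q:ℤ) := Int.emod_nonneg a (by exact_mod_cast hq.ne')
  rw [saw_eq_of_fract_ne, hfr]
  rw [hfr]
  have : (0:ℚ) < ((a % q : ℤ):ℚ) := by
    have : (0:ℤ) < a % q := by omega
    exact_mod_cast this
  positivity

lemma sum_Icc_id_int (m : ℕ) : ∑ k ∈ Finset.Icc 1 (2*m), (k:ℤ) = m * (2*m+1) := by
  induction m with
  | zero => simp
  | succ m ih =>
    have h1 : 2*(m+1) = (2*m+1) + 1 := by ring
    rw [h1, Finset.sum_Icc_succ_top (by omega), Finset.sum_Icc_succ_top (by omega), ih]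
    push_cast
    ring

lemma sum_Icc_sq_int (m : ℕ) : 3 * ∑ k ∈ Finset.Icc 1 (2*m), (k:ℤ)^2 = m * (2*m+1) * (4*m+1) := by
  induction m with
  | zero => simp
  | succ m ih =>
    have h1 : 2*(m+1) = (2*m+1) + 1 := by ring
    rw [h1, Finset.sum_Icc_succ_top (by omega), Finset.sum_Icc_succ_top (by omega)]
    push_cast
    push_cast at ih
    linear_combination ih

theorem stmt9 (q : ℕ) (l : ℤ) (hq : 0 < q) (hodd : Odd q) (hl : IsCoprime l (q : ℤ)) :
    ∃ n : ℤ, (n : ℚ) = (q : ℚ) * S l q ∧ n ≡ (q : ℤ) + 1 - 2 * jacobiSym l q [ZMOD 8] := by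
  obtain ⟨m, rfl⟩ := hodd
  have hQz : ((2*m+1:ℕ):ℤ) = 2*(m:ℤ)+1 := by push_cast; ring
  have hQzpos : (0:ℤ) < ((2*m+1:ℕ):ℤ) := by omega
  have hQqne : ((2*m+1:ℕ):ℚ) ≠ 0 := by positivity
  set s : Finset ℕ := Finset.Icc 1 (2*m) with hs
  set R : ℕ → ℤ := fun k => l * (k:ℤ) % ((2*m+1:ℕ):ℤ) with hR
  set A : ℤ := ∑ k ∈ s, (k:ℤ) * (l * (k:ℤ) / ((2*m+1:ℕ):ℤ)) with hA
  set T : ℤ := ∑ k ∈ s, (k:ℤ) * R k with hT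
  set K2 : ℤ := ∑ k ∈ s, (k:ℤ)^2 with hK2
  have hndvd : ∀ k ∈ s, ¬ ((2*m+1:ℕ):ℤ) ∣ (k:ℤ) := by
    intro k hk
    simp only [hs, Finset.mem_Icc] at hk
    rw [Int.natCast_dvd_natCast]
    intro hdvd
    have := Nat.le_of_dvd (by omega) hdvd
    omega
  have hRk : ∀ k ∈ s, 0 < R k ∧ R k < ((2*m+1:ℕ):ℤ) := by
    intro k hk
    exact emod_range (by omega) hl (hndvd k hk)
  -- integer identities
  have hQA : ((2*m+1:ℕ):ℤ) * A = l * K2 - T := by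
    rw [hA, Finset.mul_sum, hT, hK2, Finset.mul_sum, ← Finset.sum_sub_distrib]
    apply Finset.sum_congr rfl
    intro k _
    have h := Int.mul_ediv_add_emod (l*(k:ℤ)) ((2*m+1:ℕ):ℤ)
    have hRk' : R k = l * (k:ℤ) % ((2*m+1:ℕ):ℤ) := rfl
    rw [hRk']
    linear_combination (k:ℤ) * h
  have hK2v : 3 * K2 = (m:ℤ) * (2*m+1) * (4*m+1) := by
    rw [hK2, hs]; exact sum_Icc_sq_int m
  have hT12 : 12 * T = ((2*m+1:ℕ):ℤ) * (4*l*m*(4*m+1) - 12*A) := by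
    linear_combination 12 * hQA + 4*l*hK2v - 4*l*(m:ℤ)*(4*(m:ℤ)+1)*hQz
  -- permutation of residues
  have himg : (Finset.Icc 1 ((2*m+1)-1)).image (fun k : ℕ => (l * (k:ℤ) % ((2*m+1:ℕ):ℤ)).toNat)
      = Finset.Icc 1 ((2*m+1)-1) := image_emod (by omega) hl
  have hperm : ∀ {M : Type} [AddCommMonoid M], ∀ g : ℕ → M,
      ∑ k ∈ s, g ((R k).toNat) = ∑ k ∈ s, g k := by
    intro M _ g
    have hinj : Set.InjOn (fun k : ℕ => (l * (k:ℤ) % ((2*m+1:ℕ):ℤ)).toNat) (Finset.Icc 1 ((2*m+1)-1)) := by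
      apply Finset.injOn_of_card_image_eq
      rw [himg]
    have hs' : s = Finset.Icc 1 ((2*m+1)-1) := by norm_num [hs]
    rw [hs']
    rw [← Finset.sum_image (fun x hx y hy h => hinj hx hy h), himg]
  refine ⟨4*l*(m:ℤ)*(4*(m:ℤ)+1) - 12*A - 6*(m:ℤ)*(2*(m:ℤ)+1), ?_, ?_⟩
  · -- rational identity
    have hndvd2 : ∀ k ∈ s, ¬ ((2*m+1:ℕ):ℤ) ∣ (l * (k:ℤ)) := by
      intro k hk hdvd
      exact hndvd k hk (hl.symm.dvd_of_dvd_mul_left hdvd)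
    have hSS : S l ((2*m+1:ℕ):ℤ) = 12 * ∑ k ∈ s,
        (((k:ℕ):ℚ)/((2*m+1:ℕ):ℚ) - 1/2) * (((R k):ℚ)/((2*m+1:ℕ):ℚ) - 1/2) := by
      unfold S
      rw [Int.toNat_natCast]
      rw [Finset.sum_Icc_succ_top (by omega : 1 ≤ 2*m+1)]
      have htop : saw (((2*m+1:ℕ):ℚ) / (((2*m+1:ℕ):ℤ):ℚ)) *
          saw ((l:ℚ) * ((2*m+1:ℕ):ℚ) / (((2*m+1:ℕ):ℤ):ℚ)) = 0 := by
        have : (((2*m+1:ℕ):ℚ)) / (((2*m+1:ℕ):ℤ):ℚ) = 1 := by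
          rw [Int.cast_natCast, div_self hQqne]
        rw [this]
        have hsaw1 : saw 1 = 0 := by unfold saw; norm_num
        rw [hsaw1, zero_mul]
      rw [htop, add_zero]
      congr 1
      apply Finset.sum_congr (by rw [hs])
      intro k hk
      have hk' : k ∈ s := by rwa [hs]
      have h1 : saw (((k:ℕ):ℚ) / (((2*m+1:ℕ):ℤ):ℚ)) = ((k:ℕ):ℚ)/((2*m+1:ℕ):ℚ) - 1/2 := by
        have := saw_div (k:ℤ) (2*m+1) (by omega) (hndvd k hk')
        rw [Int.cast_natCast]
        rw [show (((k:ℤ)):ℚ) = ((k:ℕ):ℚ) from by push_cast; ring] at this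
        rw [this]
        have hmod : (k:ℤ) % ((2*m+1:ℕ):ℤ) = (k:ℤ) := by
          simp only [hs, Finset.mem_Icc] at hk'
          rw [Int.emod_eq_of_lt (by positivity) (by push_cast; omega)]
        rw [hmod]
        push_cast
        ring
      have h2 : saw ((l:ℚ) * ((k:ℕ):ℚ) / (((2*m+1:ℕ):ℤ):ℚ)) = ((R k):ℚ)/((2*m+1:ℕ):ℚ) - 1/2 := by
        have := saw_div (l * (k:ℤ)) (2*m+1) (by omega) (hndvd2 k hk')
        rw [Int.cast_natCast]
        rw [show ((l * (k:ℤ) : ℤ):ℚ) = (l:ℚ) * ((k:ℕ):ℚ) from by push_cast; ring] at this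
        rw [this]
      rw [h1, h2]
    have hsumk : ∑ k ∈ s, ((k:ℕ):ℚ) = (m:ℚ)*(2*(m:ℚ)+1) := by
      have h0 := sum_Icc_id_int m
      have h1 := congrArg (fun z : ℤ => (z:ℚ)) h0
      push_cast at h1
      rw [hs]
      linear_combination h1
    have hsumR : ∑ k ∈ s, ((R k):ℚ) = (m:ℚ)*(2*(m:ℚ)+1) := by
      have h1 : ∀ k ∈ s, ((R k):ℚ) = (((R k).toNat : ℕ):ℚ) := fun k hk => by
        have h := Int.toNat_of_nonneg (hRk k hk).1.le
        exact_mod_cast (congrArg (fun z : ℤ => (z:ℚ)) h).symm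
      rw [Finset.sum_congr rfl h1, hperm (fun j : ℕ => ((j:ℕ):ℚ))]
      exact hsumk
    have hterm : ∀ k ∈ s, (((k:ℕ):ℚ)/((2*m+1:ℕ):ℚ) - 1/2) * (((R k):ℚ)/((2*m+1:ℕ):ℚ) - 1/2)
        = (((k:ℕ):ℚ)*((R k):ℚ))/((2*m+1:ℕ):ℚ)^2 - ((k:ℕ):ℚ)/(2*((2*m+1:ℕ):ℚ))
          - ((R k):ℚ)/(2*((2*m+1:ℕ):ℚ)) + 1/4 := by
      intro k _
      field_simp
      ring
    have hP : ∑ k ∈ s, (((k:ℕ):ℚ)/((2*m+1:ℕ):ℚ) - 1/2) * (((R k):ℚ)/((2*m+1:ℕ):ℚ) - 1/2)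
        = (T:ℚ)/((2*m+1:ℕ):ℚ)^2 - ((m:ℚ)*(2*(m:ℚ)+1))/(2*((2*m+1:ℕ):ℚ))
          - ((m:ℚ)*(2*(m:ℚ)+1))/(2*((2*m+1:ℕ):ℚ)) + (2*m:ℚ)*(1/4) := by
      have e1 : ∑ k ∈ s, (((k:ℕ):ℚ)*((R k):ℚ)) = (T:ℚ) := by
        rw [hT]
        push_cast
        rfl
      rw [Finset.sum_congr rfl hterm, Finset.sum_add_distrib, Finset.sum_sub_distrib,
        Finset.sum_sub_distrib, ← Finset.sum_div, ← Finset.sum_div, ← Finset.sum_div,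
        hsumk, hsumR, e1, Finset.sum_const, hs, Nat.card_Icc, nsmul_eq_mul]
      push_cast
      ring
    have hT12q : 12 * (T:ℚ) = ((2*m+1:ℕ):ℚ) * (4*(l:ℚ)*(m:ℚ)*(4*(m:ℚ)+1) - 12*(A:ℚ)) := by
      have h1 := congrArg (fun z : ℤ => (z:ℚ)) hT12
      push_cast at h1 ⊢
      linear_combination h1
    have hu : 12*(T:ℚ)/((2*m+1:ℕ):ℚ) = 4*(l:ℚ)*(m:ℚ)*(4*(m:ℚ)+1) - 12*(A:ℚ) := by
      rw [hT12q, mul_div_cancel_left₀ _ hQqne]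
    rw [hSS, hP]
    have hstep : ((2*m+1:ℕ):ℚ) * (12 * ((T:ℚ)/((2*m+1:ℕ):ℚ)^2
        - ((m:ℚ)*(2*(m:ℚ)+1))/(2*((2*m+1:ℕ):ℚ)) - ((m:ℚ)*(2*(m:ℚ)+1))/(2*((2*m+1:ℕ):ℚ))
        + (2*m:ℚ)*(1/4)))
        = 12*(T:ℚ)/((2*m+1:ℕ):ℚ) - 12*((m:ℚ)*(2*(m:ℚ)+1)) + 6*(m:ℚ)*((2*m+1:ℕ):ℚ) := by
      field_simp
      ring
    rw [hstep, hu]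
    push_cast
    ring
  · -- the congruence part
    have hm1 : Odd (2*m+1) := ⟨m, rfl⟩
    have hμJ : jacobiSym l (2*m+1) = (-1)^(mu l (2*m+1)) := gauss_jacobi (2*m+1) hm1 l hl
    have h2' : (2 : ZMod 2) = 0 := rfl
    -- cast of sum of k over s
    have hsum_cast : (∑ k ∈ s, ((k:ℕ) : ZMod 2)) = (m : ZMod 2) := by
      have h0 := sum_Icc_id_int m
      have h1 := congrArg (fun z : ℤ => (z : ZMod 2)) h0
      push_cast at h1
      rw [hs]
      linear_combination h1 + (m:ZMod 2)*(m:ZMod 2)*h2'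
    -- even k's in s are the doubles of Icc 1 m
    have hevenimg : s.filter (fun k => Even k) = (Finset.Icc 1 m).image (fun j => 2*j) := by
      ext j
      simp only [Finset.mem_filter, Finset.mem_image, Finset.mem_Icc, hs, Nat.even_iff]
      constructor
      · rintro ⟨⟨hj1, hj2⟩, hpar⟩
        exact ⟨j/2, by omega, by omega⟩
      · rintro ⟨c, ⟨hc1, hc2⟩, rfl⟩
        omega
    -- parity of R(2j)
    have hRdouble : ∀ j ∈ Finset.Icc 1 m, ((R (2*j) : ℤ) : ZMod 2)
        = if ((2*m+1:ℕ):ℤ) < 2 * R j then 1 else 0 := by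
      intro j hj
      simp only [Finset.mem_Icc] at hj
      have hjs : j ∈ s := by simp only [hs, Finset.mem_Icc]; omega
      have hx := hRk j hjs
      have hm1' : 1 ≤ m := by omega
      have hquot : R (2*j) = (2 * R j) % ((2*m+1:ℕ):ℤ) := by
        have h1 : l * ((2*j : ℕ):ℤ) = 2 * (l * (j:ℕ)) := by push_cast; ring
        show l * ((2*j : ℕ):ℤ) % ((2*m+1:ℕ):ℤ) = _
        rw [h1, Int.mul_emod 2 (l * (j:ℕ)) ((2*m+1:ℕ):ℤ),
          Int.emod_eq_of_lt (by omega) (by omega : (2:ℤ) < ((2*m+1:ℕ):ℤ))]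
      by_cases hc : ((2*m+1:ℕ):ℤ) < 2 * R j
      · rw [if_pos hc]
        have hval : R (2*j) = 2 * R j - ((2*m+1:ℕ):ℤ) := by
          rw [hquot, ← Int.sub_emod_right,
            Int.emod_eq_of_lt (by omega) (by omega)]
        rw [hval]
        push_cast
        linear_combination (((R j : ℤ) : ZMod 2) - (m : ZMod 2) - 1) * h2'
      · rw [if_neg hc]
        have hval : R (2*j) = 2 * R j := by
          rw [hquot, Int.emod_eq_of_lt (by omega) (by omega)]
        rw [hval]
        push_cast
        linear_combination ((R j : ℤ) : ZMod 2) * h2'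
    -- sum over even k's gives mu
    have hevensum : (∑ k ∈ s.filter (fun k => Even k), ((R k : ℤ) : ZMod 2))
        = ((mu l (2*m+1) : ℕ) : ZMod 2) := by
      rw [hevenimg, Finset.sum_image (by intro a _ b _ h; simp only at h; omega)]
      rw [Finset.sum_congr rfl hRdouble, Finset.sum_boole]
      have hm' : (2*m+1)/2 = m := by omega
      unfold mu
      rw [hm']
    have hsq2 : ∀ x : ZMod 2, x^2 = x := by decide
    have hT2 : ((T:ℤ) : ZMod 2) = (m : ZMod 2) + ((mu l (2*m+1) : ℕ) : ZMod 2) := by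
      have hTc : ((T:ℤ) : ZMod 2) = ∑ k ∈ s, ((k:ℕ) : ZMod 2) * ((R k : ℤ) : ZMod 2) := by
        rw [hT]; push_cast; rfl
      have hsplit := Finset.sum_filter_add_sum_filter_not s (fun k => Even k)
        (fun k => ((k:ℕ) : ZMod 2) * ((R k : ℤ) : ZMod 2))
      have hev0 : (∑ k ∈ s.filter (fun k => Even k),
          ((k:ℕ) : ZMod 2) * ((R k : ℤ) : ZMod 2)) = 0 := by
        apply Finset.sum_eq_zero
        intro k hk
        obtain ⟨c, rfl⟩ := (Finset.mem_filter.1 hk).2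
        have hc0 : ((c + c : ℕ) : ZMod 2) = 0 := by
          push_cast
          linear_combination (c : ZMod 2) * h2'
        rw [hc0, zero_mul]
      have hodd1 : (∑ k ∈ s.filter (fun k => ¬ Even k),
          ((k:ℕ) : ZMod 2) * ((R k : ℤ) : ZMod 2))
          = ∑ k ∈ s.filter (fun k => ¬ Even k), ((R k : ℤ) : ZMod 2) := by
        apply Finset.sum_congr rfl
        intro k hk
        have hko : Odd k := Nat.not_even_iff_odd.mp (Finset.mem_filter.1 hk).2
        rw [odd_natCast_zmod2 hko, one_mul]
      have htot := Finset.sum_filter_add_sum_filter_not s (fun k => Even k)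
        (fun k => ((R k : ℤ) : ZMod 2))
      have hall : (∑ k ∈ s, ((R k : ℤ) : ZMod 2)) = (m : ZMod 2) := by
        have h1 : ∀ k ∈ s, ((R k : ℤ) : ZMod 2) = (((R k).toNat : ℕ) : ZMod 2) := by
          intro k hk
          have h := Int.toNat_of_nonneg (hRk k hk).1.le
          exact_mod_cast (congrArg (fun z : ℤ => (z : ZMod 2)) h).symm
        rw [Finset.sum_congr rfl h1, hperm (fun j : ℕ => ((j:ℕ) : ZMod 2)), hsum_cast]
      rw [hTc, ← hsplit, hev0, hodd1, zero_add]
      linear_combination htot - hevensum + hall - ((mu l (2*m+1) : ℕ) : ZMod 2) * h2'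
    have hK2c : ((K2:ℤ) : ZMod 2) = (m : ZMod 2) := by
      have h1 : ((K2:ℤ) : ZMod 2) = ∑ k ∈ s, ((k:ℕ) : ZMod 2)^2 := by
        rw [hK2]; push_cast; rfl
      rw [h1, Finset.sum_congr rfl (fun k _ => hsq2 _), hsum_cast]
    have hQAc := congrArg (fun z : ℤ => (z : ZMod 2)) hQA
    push_cast at hQAc
    have hAc : ((A:ℤ) : ZMod 2) = ((l:ℤ) : ZMod 2) * (m : ZMod 2) + (m : ZMod 2)
        + ((mu l (2*m+1) : ℕ) : ZMod 2) := by
      linear_combination hQAc + ((l:ℤ) : ZMod 2) * hK2c - hT2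
        - ((m : ZMod 2) * ((A:ℤ) : ZMod 2) + (m : ZMod 2)
          + ((mu l (2*m+1) : ℕ) : ZMod 2)) * h2'
    obtain ⟨w, hw⟩ : ∃ w : ℤ, A = l*(m:ℤ) + (m:ℤ) + ((mu l (2*m+1) : ℕ) : ℤ) + 2*w := by
      have hdvd : ((2:ℕ):ℤ) ∣ (l*(m:ℤ) + (m:ℤ) + ((mu l (2*m+1) : ℕ) : ℤ) - A) := by
        rw [← ZMod.intCast_zmod_eq_zero_iff_dvd]
        push_cast
        linear_combination - hAc
      obtain ⟨c, hc⟩ := hdvd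
      refine ⟨-c, by push_cast at hc; linarith⟩
    rw [hμJ]
    rcases Nat.even_or_odd (mu l (2*m+1)) with he | ho
    · obtain ⟨t, ht⟩ := he
      rw [ht] at hw
      have hpow : ((-1:ℤ))^(t+t) = 1 := Even.neg_one_pow (Even.add_self t)
      rw [ht, hpow]
      refine Int.modEq_iff_dvd.mpr ?_
      have h8 : ((8:ℕ):ℤ) ∣ ((↑(2*m+1) + 1 - 2*1) -
          (4*l*(m:ℤ)*(4*(m:ℤ)+1) - 12*A - 6*(m:ℤ)*(2*(m:ℤ)+1))) := by
        rw [← ZMod.intCast_zmod_eq_zero_iff_dvd, hw]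
        push_cast
        generalize ((l : ℤ) : ZMod 8) = x
        generalize ((m : ℕ) : ZMod 8) = y
        generalize ((t : ℕ) : ZMod 8) = z
        generalize ((w : ℤ) : ZMod 8) = u
        have h24 : (24 : ZMod 8) = 0 := by decide
        have key : ∀ x y : ZMod 8,
            2*y+1+1-2 - (4*x*y*(4*y+1) - 12*(x*y+y) - 6*y*(2*y+1)) = 0 := by decide
        linear_combination key x y + (z + u) * h24
      exact_mod_cast h8
    · obtain ⟨t, ht⟩ := ho
      rw [ht] at hw
      have hpow : ((-1:ℤ))^(2*t+1) = -1 := Odd.neg_one_pow (odd_two_mul_add_one t)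
      rw [ht, hpow]
      refine Int.modEq_iff_dvd.mpr ?_
      have h8 : ((8:ℕ):ℤ) ∣ ((↑(2*m+1) + 1 - 2*(-1)) -
          (4*l*(m:ℤ)*(4*(m:ℤ)+1) - 12*A - 6*(m:ℤ)*(2*(m:ℤ)+1))) := by
        rw [← ZMod.intCast_zmod_eq_zero_iff_dvd, hw]
        push_cast
        generalize ((l : ℤ) : ZMod 8) = x
        generalize ((m : ℕ) : ZMod 8) = y
        generalize ((t : ℕ) : ZMod 8) = z
        generalize ((w : ℤ) : ZMod 8) = u
        have h24 : (24 : ZMod 8) = 0 := by decide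
        have key : ∀ x y : ZMod 8,
            2*y+1+1+2 - (4*x*y*(4*y+1) - 12*(x*y+y+1) - 6*y*(2*y+1)) = 0 := by decide
        linear_combination key x y + (z + u) * h24
      exact_mod_cast h8
end
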